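/- arXiv:2603.18952 — 2 statements merged into one kernel-verified Lean document; each statement's English description precedes it below -/
import Mathlib

section
/- Let k ≥ 4 be an integer, let 0 < ε < 0.01 be a real number, and let n ≥ 2k·ε^{−13}. Let G = (V, E) be a simple graph with n vertices whose minimum degree δ satisfies δ > n/2 − ε³·n − 1/2, and suppose that for every vertex set S ⊆ V with |S| ≤ 5k and any two vertices u, v ∈ V \ S there is a path of length 2 or 3 from u to v in G avoiding all vertices of S. Let p and q be adjacent vertices of G with more than n/6 common neighbors, and set A := N(p) \ {q}. Then any two distinct edges of G, each of which has at least one endpoint in A and neither of whose endpoints lies in {p, q}, lie on a common cycle of length 2k+1. -/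
open SimpleGraph

set_option linter.unusedSectionVars false

namespace Stmt13
variable {V : Type} [Fintype V] [DecidableEq V] {G : SimpleGraph V} [DecidableRel G.Adj] {k : ℕ} {p q : V}

/-- Bundled working hypotheses. -/
structure Hyp (G : SimpleGraph V) (k : ℕ) (p q : V) : Prop where
  hk : 4 ≤ k
  hpq : G.Adj p q
  freshC : ∀ T : Finset V, T.card ≤ 5*k → ∃ c, G.Adj p c ∧ G.Adj q c ∧ c ∉ T
  span : ∀ u v : V, ∀ S T : Finset V, S.card ≤ 5*k → T.card ≤ 5*k →
     (∀ x, G.Adj u x → G.Adj v x → x ∈ S) →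
     ∃ c, G.Adj p c ∧ G.Adj q c ∧ c ∉ T ∧ (G.Adj u c ∨ G.Adj v c)
  hpath : ∀ S : Finset V, S.card ≤ 5 * k → ∀ u v : V, u ∉ S → v ∉ S → u ≠ v →
      ∃ w : G.Walk u v, w.IsPath ∧ (w.length = 2 ∨ w.length = 3) ∧ ∀ z ∈ w.support, z ∉ S

theorem myJoin {u v x : V} {w₁ : G.Walk u v} {w₂ : G.Walk v x}
    (h₁ : w₁.IsPath) (h₂ : w₂.IsPath)
    (h : ∀ z ∈ w₁.support, z ∈ w₂.support → z = v) : (w₁.append w₂).IsPath := by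
  rw [Walk.isPath_def, Walk.support_append]
  refine List.Nodup.append h₁.support_nodup (h₂.support_nodup.sublist (List.tail_sublist _)) ?_
  intro a ha ha'
  have hav := h a ha (List.mem_of_mem_tail ha')
  subst hav
  have := h₂.support_nodup
  rw [Walk.support_eq_cons w₂] at this
  exact (List.nodup_cons.mp this).1 ha'

theorem joinAvoid {u v x : V} {S : Finset V} {w₁ : G.Walk u v} {w₂ : G.Walk v x}
    (h₁ : w₁.IsPath) (h₂ : w₂.IsPath)
    (hd : ∀ z ∈ w₁.support, z ∈ w₂.support → z = v)
    (a₁ : ∀ z ∈ w₁.support, z ∉ S) (a₂ : ∀ z ∈ w₂.support, z ∉ S) :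
    (w₁.append w₂).IsPath ∧ ((w₁.append w₂).length = w₁.length + w₂.length) ∧
      (∀ z ∈ (w₁.append w₂).support, z ∉ S) := by
  refine ⟨myJoin h₁ h₂ hd, Walk.length_append _ _, ?_⟩
  intro z hz
  rcases (Walk.mem_support_append_iff _ _).mp hz with h | h
  · exact a₁ z h
  · exact a₂ z h

theorem disjHelp {u v x : V} {S' : Finset V} {w₁ : G.Walk u v} {w₂ : G.Walk v x}
    (hS' : ∀ z ∈ w₂.support, z ∉ S') (hsub : ∀ z ∈ w₁.support, z ≠ v → z ∈ S') :
    ∀ z ∈ w₁.support, z ∈ w₂.support → z = v := by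
  intro z h1 h2
  by_contra hne
  exact hS' z h2 (hsub z h1 hne)

theorem path1 {a b : V} (hab : G.Adj a b) :
    ∃ w : G.Walk a b, w.IsPath ∧ w.length = 1 ∧ w.support = [a, b] := by
  exact ⟨Walk.cons hab Walk.nil, by simp [Walk.isPath_def, hab.ne], by simp, by simp⟩

theorem path2 {a b c : V} (hab : G.Adj a b) (hbc : G.Adj b c) (hac : a ≠ c) :
    ∃ w : G.Walk a c, w.IsPath ∧ w.length = 2 ∧ w.support = [a, b, c] := by
  refine ⟨Walk.cons hab (Walk.cons hbc Walk.nil), ?_, by simp, by simp⟩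
  simp [Walk.isPath_def, hab.ne, hbc.ne, hac]

theorem path3 {a b c d : V} (hab : G.Adj a b) (hbc : G.Adj b c) (hcd : G.Adj c d)
    (hac : a ≠ c) (had : a ≠ d) (hbd : b ≠ d) :
    ∃ w : G.Walk a d, w.IsPath ∧ w.length = 3 ∧ w.support = [a, b, c, d] := by
  refine ⟨Walk.cons hab (Walk.cons hbc (Walk.cons hcd Walk.nil)), ?_, by simp, by simp⟩
  simp [Walk.isPath_def, hab.ne, hbc.ne, hcd.ne, hac, had, hbd]

theorem path4 {a b c d e : V} (hab : G.Adj a b) (hbc : G.Adj b c) (hcd : G.Adj c d)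
    (hde : G.Adj d e) (hac : a ≠ c) (had : a ≠ d) (hae : a ≠ e) (hbd : b ≠ d)
    (hbe : b ≠ e) (hce : c ≠ e) :
    ∃ w : G.Walk a e, w.IsPath ∧ w.length = 4 ∧ w.support = [a, b, c, d, e] := by
  refine ⟨Walk.cons hab (Walk.cons hbc (Walk.cons hcd (Walk.cons hde Walk.nil))), ?_, by simp,
    by simp⟩
  simp [Walk.isPath_def, hab.ne, hbc.ne, hcd.ne, hde.ne, hac, had, hae, hbd, hbe, hce]

theorem decomp2 {u v : V} (w : G.Walk u v) (hl : w.length = 2) :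
    ∃ x, x ∈ w.support ∧ G.Adj u x ∧ G.Adj x v := by
  match w with
  | .nil => simp at hl
  | .cons h .nil => simp at hl
  | .cons (v := x) h (.cons h' .nil) => exact ⟨x, by simp, h, h'⟩
  | .cons h (.cons h' (.cons h'' w')) => simp [Walk.length_cons] at hl

theorem E23 (H : Hyp G k p q) {u v : V} (S : Finset V) (hu : u ∉ S) (hv : v ∉ S) (huv : u ≠ v)
    (hS : S.card + 2 ≤ 5*k) :
    ∃ w : G.Walk u v, w.IsPath ∧ (∀ z ∈ w.support, z ∉ S) ∧
      (w.length = 2 ∨ (w.length = 3 ∧ ∀ x, G.Adj u x → G.Adj v x → x ∈ S)) := by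
  by_cases hx : ∃ x, G.Adj u x ∧ G.Adj v x ∧ x ∉ S
  · obtain ⟨x, hux, hvx, hxS⟩ := hx
    obtain ⟨w, hw1, hw2, hw3⟩ := path2 hux hvx.symm huv
    refine ⟨w, hw1, ?_, Or.inl hw2⟩
    intro z hz; rw [hw3] at hz
    simp only [List.mem_cons, List.not_mem_nil, or_false] at hz
    rcases hz with rfl | rfl | rfl <;> assumption
  · push_neg at hx
    obtain ⟨w, hw1, hw2, hw3⟩ := H.hpath S (by omega) u v hu hv huv
    rcases hw2 with h2 | h3
    · obtain ⟨x, hxs, hux, hxv⟩ := decomp2 w h2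
      exact absurd (hx x hux hxv.symm) (hw3 x hxs)
    · exact ⟨w, hw1, hw3, Or.inr ⟨h3, hx⟩⟩


theorem card2 {a b : V} : ({a,b} : Finset V).card ≤ 2 := by
  classical
  have h := List.toFinset_card_le [a,b]; simpa using h
theorem card3 {a b c : V} : ({a,b,c} : Finset V).card ≤ 3 := by
  classical
  have h := List.toFinset_card_le [a,b,c]; simpa using h
theorem card4 {a b c d : V} : ({a,b,c,d} : Finset V).card ≤ 4 := by
  classical
  have h := List.toFinset_card_le [a,b,c,d]; simpa using h
theorem card5 {a b c d e : V} : ({a,b,c,d,e} : Finset V).card ≤ 5 := by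
  classical
  have h := List.toFinset_card_le [a,b,c,d,e]; simpa using h

theorem exactCC (H : Hyp G k p q) : ∀ r : ℕ, 2 ≤ r → ∀ (c c' : V) (S : Finset V),
    G.Adj p c → G.Adj q c → G.Adj p c' → G.Adj q c' → c ≠ c' → c ∉ S → c' ∉ S → p ∉ S → q ∉ S →
    (2*S.card + 3*r + 16 ≤ 10*k ∨ (r ≤ 4 ∧ S.card + 6 ≤ 5*k)) →
    ∃ w : G.Walk c c', w.IsPath ∧ w.length = r ∧ ∀ z ∈ w.support, z ∉ S := by
  classical
  intro r
  induction r using Nat.strong_induction_on with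
  | _ r ih =>
  intro hr c c' S hpc hqc hpc' hqc' hcc' hcS hc'S hpS hqS hbud
  have hS6 : S.card + 6 ≤ 5*k := by omega
  rcases Nat.lt_or_ge r 5 with h5 | h5
  · interval_cases r
    · -- r = 2 : c - q - c'
      obtain ⟨w, h1, h2, h3⟩ := path2 hqc.symm hqc' hcc'
      refine ⟨w, h1, h2, ?_⟩
      intro z hz; rw [h3] at hz; simp only [List.mem_cons, List.not_mem_nil, or_false] at hz
      rcases hz with rfl|rfl|rfl <;> assumption
    · -- r = 3 : c - p - q - c'
      obtain ⟨w, h1, h2, h3⟩ := path3 hpc.symm H.hpq hqc' hqc.ne' hcc' hpc'.ne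
      refine ⟨w, h1, h2, ?_⟩
      intro z hz; rw [h3] at hz; simp only [List.mem_cons, List.not_mem_nil, or_false] at hz
      rcases hz with rfl|rfl|rfl|rfl <;> assumption
    · -- r = 4 : c - p - c₂ - q - c'
      obtain ⟨c2, hpc2, hqc2, hc2⟩ := H.freshC (S ∪ {c, c', p, q}) (by
        have h1 := Finset.card_union_le S ({c, c', p, q} : Finset V)
        have h2 := card4 (a := c) (b := c') (c := p) (d := q)
        omega)
      simp only [Finset.mem_union, Finset.mem_insert, Finset.mem_singleton, not_or] at hc2
      obtain ⟨hc2S, hc2c, hc2c', hc2p, hc2q⟩ := hc2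
      obtain ⟨w, h1, h2, h3⟩ := path4 hpc.symm hpc2 hqc2.symm hqc'
        (fun h => hc2c h.symm) hqc.ne' hcc' H.hpq.ne hpc'.ne hc2c'
      refine ⟨w, h1, h2, ?_⟩
      intro z hz; rw [h3] at hz; simp only [List.mem_cons, List.not_mem_nil, or_false] at hz
      rcases hz with rfl|rfl|rfl|rfl|rfl <;> assumption
  · -- step : peel an E23 from c to a fresh c₂
    have hbig : 2*S.card + 3*r + 16 ≤ 10*k := by omega
    obtain ⟨c2, hpc2, hqc2, hc2⟩ := H.freshC (S ∪ {c, c', p, q}) (by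
      have h1 := Finset.card_union_le S ({c, c', p, q} : Finset V)
      have h2 := card4 (a := c) (b := c') (c := p) (d := q)
      omega)
    simp only [Finset.mem_union, Finset.mem_insert, Finset.mem_singleton, not_or] at hc2
    obtain ⟨hc2S, hc2c, hc2c', hc2p, hc2q⟩ := hc2
    obtain ⟨w₁, hw1P, hw1A, hw1L⟩ := E23 H (S ∪ {p, q, c'})
      (by simp only [Finset.mem_union, Finset.mem_insert, Finset.mem_singleton, not_or]
          exact ⟨hcS, hpc.ne', hqc.ne', hcc'⟩)
      (by simp only [Finset.mem_union, Finset.mem_insert, Finset.mem_singleton, not_or]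
          exact ⟨hc2S, hc2p, hc2q, hc2c'⟩)
      (fun h => hc2c h.symm)
      (by have h1 := Finset.card_union_le S ({p, q, c'} : Finset V)
          have h2 := card3 (a := p) (b := q) (c := c')
          omega)
    have hw1L' : w₁.length = 2 ∨ w₁.length = 3 := by
      rcases hw1L with h | ⟨h, _⟩
      · exact Or.inl h
      · exact Or.inr h
    have hc'w1 : c' ∉ w₁.support := fun h => (hw1A c' h) (by simp)
    have hpw1 : p ∉ w₁.support := fun h => (hw1A p h) (by simp)
    have hqw1 : q ∉ w₁.support := fun h => (hw1A q h) (by simp)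
    set S' := S ∪ (w₁.support.toFinset.erase c2) with hS'
    have hlen1 : 2 ≤ w₁.length := by omega
    have hlen2 : w₁.length ≤ 3 := by omega
    have hcardS' : S'.card ≤ S.card + 3 := by
      have h1 : S'.card ≤ S.card + (w₁.support.toFinset.erase c2).card := by
        rw [hS']; exact Finset.card_union_le _ _
      have h2 : (w₁.support.toFinset.erase c2).card = w₁.support.toFinset.card - 1 :=
        Finset.card_erase_of_mem (by simp [List.mem_toFinset])
      have h3 := List.toFinset_card_le w₁.support
      have h4 : w₁.support.length = w₁.length + 1 := w₁.length_support
      omega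
    have hmemS' : ∀ z, z ∈ w₁.support → z ≠ c2 → z ∈ S' := by
      intro z hz hne
      simp only [hS', Finset.mem_union, Finset.mem_erase, List.mem_toFinset]
      exact Or.inr ⟨hne, hz⟩
    obtain ⟨w₂, hw2P, hw2L, hw2A⟩ := ih (r - w₁.length) (by omega) (by omega) c2 c' S'
      hpc2 hqc2 hpc' hqc' hc2c'
      (by simp only [hS', Finset.mem_union, Finset.mem_erase, List.mem_toFinset, not_or]
          exact ⟨hc2S, fun h => (h.1 rfl).elim⟩)
      (by simp only [hS', Finset.mem_union, Finset.mem_erase, List.mem_toFinset, not_or]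
          exact ⟨hc'S, fun h => hc'w1 h.2⟩)
      (by simp only [hS', Finset.mem_union, Finset.mem_erase, List.mem_toFinset, not_or]
          exact ⟨hpS, fun h => hpw1 h.2⟩)
      (by simp only [hS', Finset.mem_union, Finset.mem_erase, List.mem_toFinset, not_or]
          exact ⟨hqS, fun h => hqw1 h.2⟩)
      (Or.inl (by omega))
    have hdisj : ∀ z ∈ w₁.support, z ∈ w₂.support → z = c2 :=
      disjHelp hw2A hmemS'
    have hA1 : ∀ z ∈ w₁.support, z ∉ S := fun z hz hzS => (hw1A z hz) (by simp [hzS])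
    have hA2 : ∀ z ∈ w₂.support, z ∉ S := fun z hz hzS => (hw2A z hz) (by simp [hS', hzS])
    obtain ⟨hP, hL, hA⟩ := joinAvoid hw1P hw2P hdisj hA1 hA2
    exact ⟨w₁.append w₂, hP, by omega, hA⟩

theorem exactCP (H : Hyp G k p q) : ∀ m : ℕ, 1 ≤ m → ∀ (c : V) (S : Finset V),
    G.Adj p c → G.Adj q c → c ∉ S → p ∉ S → q ∉ S →
    2*S.card + 3*m + 16 ≤ 10*k →
    ∃ w : G.Walk c p, w.IsPath ∧ w.length = m ∧ ∀ z ∈ w.support, z ∉ S := by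
  classical
  intro m
  induction m using Nat.strong_induction_on with
  | _ m ih =>
  intro hm c S hpc hqc hcS hpS hqS hbud
  rcases Nat.lt_or_ge m 4 with h4 | h4
  · interval_cases m
    · -- m = 1 : edge c - p
      obtain ⟨w, h1, h2, h3⟩ := path1 hpc.symm
      refine ⟨w, h1, h2, ?_⟩
      intro z hz; rw [h3] at hz; simp only [List.mem_cons, List.not_mem_nil, or_false] at hz
      rcases hz with rfl|rfl <;> assumption
    · -- m = 2 : c - q - p
      obtain ⟨w, h1, h2, h3⟩ := path2 hqc.symm H.hpq.symm hpc.ne'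
      refine ⟨w, h1, h2, ?_⟩
      intro z hz; rw [h3] at hz; simp only [List.mem_cons, List.not_mem_nil, or_false] at hz
      rcases hz with rfl|rfl|rfl <;> assumption
    · -- m = 3 : c - q - c'' - p
      obtain ⟨c2, hpc2, hqc2, hc2⟩ := H.freshC (S ∪ {c, p, q}) (by
        have h1 := Finset.card_union_le S ({c, p, q} : Finset V)
        have h2 := card3 (a := c) (b := p) (c := q)
        omega)
      simp only [Finset.mem_union, Finset.mem_insert, Finset.mem_singleton, not_or] at hc2
      obtain ⟨hc2S, hc2c, hc2p, hc2q⟩ := hc2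
      obtain ⟨w, h1, h2, h3⟩ := path3 hqc.symm hqc2 hpc2.symm
        (fun h => hc2c h.symm) hpc.ne' H.hpq.ne'
      refine ⟨w, h1, h2, ?_⟩
      intro z hz; rw [h3] at hz; simp only [List.mem_cons, List.not_mem_nil, or_false] at hz
      rcases hz with rfl|rfl|rfl|rfl <;> assumption
  · -- step
    obtain ⟨c2, hpc2, hqc2, hc2⟩ := H.freshC (S ∪ {c, p, q}) (by
      have h1 := Finset.card_union_le S ({c, p, q} : Finset V)
      have h2 := card3 (a := c) (b := p) (c := q)
      omega)
    simp only [Finset.mem_union, Finset.mem_insert, Finset.mem_singleton, not_or] at hc2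
    obtain ⟨hc2S, hc2c, hc2p, hc2q⟩ := hc2
    obtain ⟨w₁, hw1P, hw1A, hw1L⟩ := E23 H (S ∪ {p, q})
      (by simp only [Finset.mem_union, Finset.mem_insert, Finset.mem_singleton, not_or]
          exact ⟨hcS, hpc.ne', hqc.ne'⟩)
      (by simp only [Finset.mem_union, Finset.mem_insert, Finset.mem_singleton, not_or]
          exact ⟨hc2S, hc2p, hc2q⟩)
      (fun h => hc2c h.symm)
      (by have h1 := Finset.card_union_le S ({p, q} : Finset V)
          have h2 := card2 (a := p) (b := q)
          omega)
    have hw1L' : w₁.length = 2 ∨ w₁.length = 3 := by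
      rcases hw1L with h | ⟨h, _⟩
      · exact Or.inl h
      · exact Or.inr h
    have hpw1 : p ∉ w₁.support := fun h => (hw1A p h) (by simp)
    have hqw1 : q ∉ w₁.support := fun h => (hw1A q h) (by simp)
    set S' := S ∪ (w₁.support.toFinset.erase c2) with hS'
    have hcardS' : S'.card ≤ S.card + 3 := by
      have h1 : S'.card ≤ S.card + (w₁.support.toFinset.erase c2).card := by
        rw [hS']; exact Finset.card_union_le _ _
      have h2 : (w₁.support.toFinset.erase c2).card = w₁.support.toFinset.card - 1 :=
        Finset.card_erase_of_mem (by simp [List.mem_toFinset])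
      have h3 := List.toFinset_card_le w₁.support
      have h4 : w₁.support.length = w₁.length + 1 := w₁.length_support
      omega
    have hmemS' : ∀ z, z ∈ w₁.support → z ≠ c2 → z ∈ S' := by
      intro z hz hne
      simp only [hS', Finset.mem_union, Finset.mem_erase, List.mem_toFinset]
      exact Or.inr ⟨hne, hz⟩
    obtain ⟨w₂, hw2P, hw2L, hw2A⟩ := ih (m - w₁.length) (by omega) (by omega) c2 S'
      hpc2 hqc2
      (by simp only [hS', Finset.mem_union, Finset.mem_erase, List.mem_toFinset, not_or]
          exact ⟨hc2S, fun h => (h.1 rfl).elim⟩)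
      (by simp only [hS', Finset.mem_union, Finset.mem_erase, List.mem_toFinset, not_or]
          exact ⟨hpS, fun h => hpw1 h.2⟩)
      (by simp only [hS', Finset.mem_union, Finset.mem_erase, List.mem_toFinset, not_or]
          exact ⟨hqS, fun h => hqw1 h.2⟩)
      (by omega)
    have hdisj : ∀ z ∈ w₁.support, z ∈ w₂.support → z = c2 := disjHelp hw2A hmemS'
    have hA1 : ∀ z ∈ w₁.support, z ∉ S := fun z hz hzS => (hw1A z hz) (by simp [hzS])
    have hA2 : ∀ z ∈ w₂.support, z ∉ S := fun z hz hzS => (hw2A z hz) (by simp [hS', hzS])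
    obtain ⟨hP, hL, hA⟩ := joinAvoid hw1P hw2P hdisj hA1 hA2
    exact ⟨w₁.append w₂, hP, by omega, hA⟩

theorem exactAP (H : Hyp G k p q) : ∀ l : ℕ, 3 ≤ l → ∀ (u : V) (S : Finset V),
    u ≠ p → u ≠ q → u ∉ S → p ∉ S → q ∉ S →
    2*S.card + 3*l + 16 ≤ 10*k →
    ∃ w : G.Walk u p, w.IsPath ∧ w.length = l ∧ ∀ z ∈ w.support, z ∉ S := by
  classical
  intro l
  induction l using Nat.strong_induction_on with
  | _ l ih =>
  intro hl u S hup huq huS hpS hqS hbud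
  rcases Nat.lt_or_ge l 4 with h4 | h4
  · -- l = 3, the base case
    obtain rfl : l = 3 := by omega
    by_cases h1 : ∃ x, G.Adj u x ∧ G.Adj p x ∧ x ∉ (S ∪ {q} : Finset V)
    · obtain ⟨w₀, huw, hpw, hw0⟩ := h1
      simp only [Finset.mem_union, Finset.mem_singleton, not_or] at hw0
      obtain ⟨hw0S, hw0q⟩ := hw0
      by_cases h2 : ∃ y, G.Adj u y ∧ G.Adj w₀ y ∧ y ∉ (S ∪ {p, q} : Finset V)
      · obtain ⟨y, huy, hwy, hy⟩ := h2
        simp only [Finset.mem_union, Finset.mem_insert, Finset.mem_singleton, not_or] at hy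
        obtain ⟨hyS, hyp, hyq⟩ := hy
        obtain ⟨w, hP, hL, hsup⟩ := path3 huy hwy.symm hpw.symm huw.ne hup hyp
        refine ⟨w, hP, hL, ?_⟩
        intro z hz; rw [hsup] at hz
        simp only [List.mem_cons, List.not_mem_nil, or_false] at hz
        rcases hz with rfl|rfl|rfl|rfl <;> assumption
      · push_neg at h2
        have hcn : ∀ y, G.Adj u y → G.Adj w₀ y → y ∈ (S ∪ {p, q} : Finset V) := by
          intro y hy1 hy2
          by_contra hyn
          exact hyn (h2 y hy1 hy2)
        obtain ⟨c, hpc, hqc, hcT, hadj⟩ := H.span u w₀ (S ∪ {p, q}) (S ∪ {u, w₀, p, q})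
          (by have h1 := Finset.card_union_le S ({p, q} : Finset V)
              have h2 := card2 (a := p) (b := q); omega)
          (by have h1 := Finset.card_union_le S ({u, w₀, p, q} : Finset V)
              have h2 := card4 (a := u) (b := w₀) (c := p) (d := q); omega)
          hcn
        simp only [Finset.mem_union, Finset.mem_insert, Finset.mem_singleton, not_or] at hcT
        obtain ⟨hcS, hcu, hcw, hcp, hcq⟩ := hcT
        rcases hadj with hcu' | hcw'
        · -- u - c - q - p
          obtain ⟨w, hP, hL, hsup⟩ := path3 hcu' hqc.symm H.hpq.symm huq hup hpc.ne'
          refine ⟨w, hP, hL, ?_⟩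
          intro z hz; rw [hsup] at hz
          simp only [List.mem_cons, List.not_mem_nil, or_false] at hz
          rcases hz with rfl|rfl|rfl|rfl <;> assumption
        · -- u - w₀ - c - p
          obtain ⟨w, hP, hL, hsup⟩ := path3 huw hcw' hpc.symm
            (fun h => hcu h.symm) hup hpw.ne'
          refine ⟨w, hP, hL, ?_⟩
          intro z hz; rw [hsup] at hz
          simp only [List.mem_cons, List.not_mem_nil, or_false] at hz
          rcases hz with rfl|rfl|rfl|rfl <;> assumption
    · push_neg at h1
      obtain ⟨w, hP, hL, hA⟩ := H.hpath (S ∪ {q})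
        (by have h1 := Finset.card_union_le S ({q} : Finset V); simp only [Finset.card_singleton] at h1; omega)
        u p
        (by simp only [Finset.mem_union, Finset.mem_singleton, not_or]; exact ⟨huS, huq⟩)
        (by simp only [Finset.mem_union, Finset.mem_singleton, not_or]
            exact ⟨hpS, H.hpq.ne⟩)
        hup
      rcases hL with h2 | h3
      · obtain ⟨x, hxs, hux, hxp⟩ := decomp2 w h2
        exact absurd (h1 x hux hxp.symm) (hA x hxs)
      · refine ⟨w, hP, h3, ?_⟩
        intro z hz
        have := hA z hz
        simp only [Finset.mem_union, Finset.mem_singleton, not_or] at this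
        exact this.1
  · -- step
    obtain ⟨c2, hpc2, hqc2, hc2⟩ := H.freshC (S ∪ {u, p, q}) (by
      have h1 := Finset.card_union_le S ({u, p, q} : Finset V)
      have h2 := card3 (a := u) (b := p) (c := q)
      omega)
    simp only [Finset.mem_union, Finset.mem_insert, Finset.mem_singleton, not_or] at hc2
    obtain ⟨hc2S, hc2u, hc2p, hc2q⟩ := hc2
    obtain ⟨w₁, hw1P, hw1A, hw1L⟩ := E23 H (S ∪ {p, q})
      (by simp only [Finset.mem_union, Finset.mem_insert, Finset.mem_singleton, not_or]
          exact ⟨huS, hup, huq⟩)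
      (by simp only [Finset.mem_union, Finset.mem_insert, Finset.mem_singleton, not_or]
          exact ⟨hc2S, hc2p, hc2q⟩)
      (fun h => hc2u h.symm)
      (by have h1 := Finset.card_union_le S ({p, q} : Finset V)
          have h2 := card2 (a := p) (b := q)
          omega)
    have hw1L' : w₁.length = 2 ∨ w₁.length = 3 := by
      rcases hw1L with h | ⟨h, _⟩
      · exact Or.inl h
      · exact Or.inr h
    have hpw1 : p ∉ w₁.support := fun h => (hw1A p h) (by simp)
    have hqw1 : q ∉ w₁.support := fun h => (hw1A q h) (by simp)
    set S' := S ∪ (w₁.support.toFinset.erase c2) with hS'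
    have hcardS' : S'.card ≤ S.card + 3 := by
      have h1 : S'.card ≤ S.card + (w₁.support.toFinset.erase c2).card := by
        rw [hS']; exact Finset.card_union_le _ _
      have h2 : (w₁.support.toFinset.erase c2).card = w₁.support.toFinset.card - 1 :=
        Finset.card_erase_of_mem (by simp [List.mem_toFinset])
      have h3 := List.toFinset_card_le w₁.support
      have h4 : w₁.support.length = w₁.length + 1 := w₁.length_support
      omega
    have hmemS' : ∀ z, z ∈ w₁.support → z ≠ c2 → z ∈ S' := by
      intro z hz hne
      simp only [hS', Finset.mem_union, Finset.mem_erase, List.mem_toFinset]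
      exact Or.inr ⟨hne, hz⟩
    obtain ⟨w₂, hw2P, hw2L, hw2A⟩ := exactCP H (l - w₁.length) (by omega) c2 S'
      hpc2 hqc2
      (by simp only [hS', Finset.mem_union, Finset.mem_erase, List.mem_toFinset, not_or]
          exact ⟨hc2S, fun h => (h.1 rfl).elim⟩)
      (by simp only [hS', Finset.mem_union, Finset.mem_erase, List.mem_toFinset, not_or]
          exact ⟨hpS, fun h => hpw1 h.2⟩)
      (by simp only [hS', Finset.mem_union, Finset.mem_erase, List.mem_toFinset, not_or]
          exact ⟨hqS, fun h => hqw1 h.2⟩)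
      (by omega)
    have hdisj : ∀ z ∈ w₁.support, z ∈ w₂.support → z = c2 := disjHelp hw2A hmemS'
    have hA1 : ∀ z ∈ w₁.support, z ∉ S := fun z hz hzS => (hw1A z hz) (by simp [hzS])
    have hA2 : ∀ z ∈ w₂.support, z ∉ S := fun z hz hzS => (hw2A z hz) (by simp [hS', hzS])
    obtain ⟨hP, hL, hA⟩ := joinAvoid hw1P hw2P hdisj hA1 hA2
    exact ⟨w₁.append w₂, hP, by omega, hA⟩

theorem exactAC (H : Hyp G k p q) : ∀ m : ℕ, 2 ≤ m → ∀ (u c' : V) (S : Finset V),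
    G.Adj p u → G.Adj p c' → G.Adj q c' → u ≠ c' → u ≠ q → u ∉ S → c' ∉ S → p ∉ S → q ∉ S →
    (2*S.card + 3*m + 16 ≤ 10*k ∨ (m ≤ 5 ∧ S.card + 12 ≤ 5*k)) →
    ∃ w : G.Walk u c', w.IsPath ∧ w.length = m ∧ ∀ z ∈ w.support, z ∉ S := by
  classical
  intro m hm u c' S hpu hpc' hqc' huc' huq huS hc'S hpS hqS hbud
  rcases Nat.lt_or_ge m 5 with h5 | h5
  · interval_cases m
    · -- m = 2 : u - p - c'
      obtain ⟨w, h1, h2, h3⟩ := path2 hpu.symm hpc' huc'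
      refine ⟨w, h1, h2, ?_⟩
      intro z hz; rw [h3] at hz; simp only [List.mem_cons, List.not_mem_nil, or_false] at hz
      rcases hz with rfl|rfl|rfl <;> assumption
    · -- m = 3 : u - p - q - c'
      obtain ⟨w, h1, h2, h3⟩ := path3 hpu.symm H.hpq hqc' huq huc' hpc'.ne
      refine ⟨w, h1, h2, ?_⟩
      intro z hz; rw [h3] at hz; simp only [List.mem_cons, List.not_mem_nil, or_false] at hz
      rcases hz with rfl|rfl|rfl|rfl <;> assumption
    · -- m = 4 : u - p - c'' - q - c'
      obtain ⟨c2, hpc2, hqc2, hc2⟩ := H.freshC (S ∪ {u, c', p, q}) (by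
        have h1 := Finset.card_union_le S ({u, c', p, q} : Finset V)
        have h2 := card4 (a := u) (b := c') (c := p) (d := q)
        omega)
      simp only [Finset.mem_union, Finset.mem_insert, Finset.mem_singleton, not_or] at hc2
      obtain ⟨hc2S, hc2u, hc2c', hc2p, hc2q⟩ := hc2
      obtain ⟨w, h1, h2, h3⟩ := path4 hpu.symm hpc2 hqc2.symm hqc'
        (fun h => hc2u h.symm) huq huc' H.hpq.ne hpc'.ne hc2c'
      refine ⟨w, h1, h2, ?_⟩
      intro z hz; rw [h3] at hz; simp only [List.mem_cons, List.not_mem_nil, or_false] at hz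
      rcases hz with rfl|rfl|rfl|rfl|rfl <;> assumption
  · -- step : peel an E23 from u to a fresh c₂, then use exactCC
    obtain ⟨c2, hpc2, hqc2, hc2⟩ := H.freshC (S ∪ {u, c', p, q}) (by
      have h1 := Finset.card_union_le S ({u, c', p, q} : Finset V)
      have h2 := card4 (a := u) (b := c') (c := p) (d := q)
      omega)
    simp only [Finset.mem_union, Finset.mem_insert, Finset.mem_singleton, not_or] at hc2
    obtain ⟨hc2S, hc2u, hc2c', hc2p, hc2q⟩ := hc2
    obtain ⟨w₁, hw1P, hw1A, hw1L⟩ := E23 H (S ∪ {p, q, c'})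
      (by simp only [Finset.mem_union, Finset.mem_insert, Finset.mem_singleton, not_or]
          exact ⟨huS, hpu.ne', huq, huc'⟩)
      (by simp only [Finset.mem_union, Finset.mem_insert, Finset.mem_singleton, not_or]
          exact ⟨hc2S, hc2p, hc2q, hc2c'⟩)
      (fun h => hc2u h.symm)
      (by have h1 := Finset.card_union_le S ({p, q, c'} : Finset V)
          have h2 := card3 (a := p) (b := q) (c := c')
          omega)
    have hw1L' : w₁.length = 2 ∨ w₁.length = 3 := by
      rcases hw1L with h | ⟨h, _⟩
      · exact Or.inl h
      · exact Or.inr h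
    have hpw1 : p ∉ w₁.support := fun h => (hw1A p h) (by simp)
    have hqw1 : q ∉ w₁.support := fun h => (hw1A q h) (by simp)
    have hc'w1 : c' ∉ w₁.support := fun h => (hw1A c' h) (by simp)
    set S' := S ∪ (w₁.support.toFinset.erase c2) with hS'
    have hcardS' : S'.card ≤ S.card + 3 := by
      have h1 : S'.card ≤ S.card + (w₁.support.toFinset.erase c2).card := by
        rw [hS']; exact Finset.card_union_le _ _
      have h2 : (w₁.support.toFinset.erase c2).card = w₁.support.toFinset.card - 1 :=
        Finset.card_erase_of_mem (by simp [List.mem_toFinset])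
      have h3 := List.toFinset_card_le w₁.support
      have h4 : w₁.support.length = w₁.length + 1 := w₁.length_support
      omega
    have hmemS' : ∀ z, z ∈ w₁.support → z ≠ c2 → z ∈ S' := by
      intro z hz hne
      simp only [hS', Finset.mem_union, Finset.mem_erase, List.mem_toFinset]
      exact Or.inr ⟨hne, hz⟩
    obtain ⟨w₂, hw2P, hw2L, hw2A⟩ := exactCC H (m - w₁.length) (by omega) c2 c' S'
      hpc2 hqc2 hpc' hqc' hc2c'
      (by simp only [hS', Finset.mem_union, Finset.mem_erase, List.mem_toFinset, not_or]
          exact ⟨hc2S, fun h => (h.1 rfl).elim⟩)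
      (by simp only [hS', Finset.mem_union, Finset.mem_erase, List.mem_toFinset, not_or]
          exact ⟨hc'S, fun h => hc'w1 h.2⟩)
      (by simp only [hS', Finset.mem_union, Finset.mem_erase, List.mem_toFinset, not_or]
          exact ⟨hpS, fun h => hpw1 h.2⟩)
      (by simp only [hS', Finset.mem_union, Finset.mem_erase, List.mem_toFinset, not_or]
          exact ⟨hqS, fun h => hqw1 h.2⟩)
      (by omega)
    have hdisj : ∀ z ∈ w₁.support, z ∈ w₂.support → z = c2 := disjHelp hw2A hmemS'
    have hA1 : ∀ z ∈ w₁.support, z ∉ S := fun z hz hzS => (hw1A z hz) (by simp [hzS])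
    have hA2 : ∀ z ∈ w₂.support, z ∉ S := fun z hz hzS => (hw2A z hz) (by simp [hS', hzS])
    obtain ⟨hP, hL, hA⟩ := joinAvoid hw1P hw2P hdisj hA1 hA2
    exact ⟨w₁.append w₂, hP, by omega, hA⟩

theorem revAvoid {u v : V} {S : Finset V} {w : G.Walk u v}
    (h : ∀ z ∈ w.support, z ∉ S) : ∀ z ∈ w.reverse.support, z ∉ S := by
  intro z hz
  rw [Walk.support_reverse, List.mem_reverse] at hz
  exact h z hz

theorem exactGG (H : Hyp G k p q) (L : ℕ) (hL : 7 ≤ L) (y x : V) (S : Finset V)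
    (hyx : y ≠ x) (hyp' : y ≠ p) (hyq : y ≠ q) (hxp : x ≠ p) (hxq : x ≠ q)
    (hyS : y ∉ S) (hxS : x ∉ S) (hpS : p ∉ S) (hqS : q ∉ S)
    (hbud : 2*S.card + 3*L + 20 ≤ 10*k ∨ (L = 7 ∧ S.card + 12 ≤ 5*k)) :
    ∃ w : G.Walk y x, w.IsPath ∧ w.length = L ∧ ∀ z ∈ w.support, z ∉ S := by
  classical
  have hk := H.hk
  -- fresh c' (the x-side attachment point)
  obtain ⟨c', hpc', hqc', hc'⟩ := H.freshC (S ∪ {x, y, p, q}) (by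
    have h1 := Finset.card_union_le S ({x, y, p, q} : Finset V)
    have h2 := card4 (a := x) (b := y) (c := p) (d := q)
    omega)
  simp only [Finset.mem_union, Finset.mem_insert, Finset.mem_singleton, not_or] at hc'
  obtain ⟨hc'S, hc'x, hc'y, hc'p, hc'q⟩ := hc'
  -- f-side walk from x to c'
  obtain ⟨wf, hwfP, hwfA, hwfL⟩ := E23 H (S ∪ {p, q, y})
    (by simp only [Finset.mem_union, Finset.mem_insert, Finset.mem_singleton, not_or]
        exact ⟨hxS, hxp, hxq, fun h => hyx h.symm⟩)
    (by simp only [Finset.mem_union, Finset.mem_insert, Finset.mem_singleton, not_or]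
        exact ⟨hc'S, hc'p, hc'q, hc'y⟩)
    (fun h => hc'x h.symm)
    (by have h1 := Finset.card_union_le S ({p, q, y} : Finset V)
        have h2 := card3 (a := p) (b := q) (c := y)
        omega)
  have hwfL' : wf.length = 2 ∨ wf.length = 3 := by
    rcases hwfL with h | ⟨h, _⟩
    · exact Or.inl h
    · exact Or.inr h
  have hywf : y ∉ wf.support := fun h => (hwfA y h) (by simp)
  have hpwf : p ∉ wf.support := fun h => (hwfA p h) (by simp)
  have hqwf : q ∉ wf.support := fun h => (hwfA q h) (by simp)
  have hwfcard : wf.support.toFinset.card ≤ wf.length + 1 := by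
    have h3 := List.toFinset_card_le wf.support
    have h4 : wf.support.length = wf.length + 1 := wf.length_support
    omega
  -- fresh c (the y-side attachment point)
  obtain ⟨c, hpc, hqc, hc⟩ := H.freshC (S ∪ {x, y, p, q, c'} ∪ wf.support.toFinset) (by
    have h1 := Finset.card_union_le (S ∪ {x, y, p, q, c'}) wf.support.toFinset
    have h0 := Finset.card_union_le S ({x, y, p, q, c'} : Finset V)
    have h2 := card5 (a := x) (b := y) (c := p) (d := q) (e := c')
    omega)
  simp only [Finset.mem_union, Finset.mem_insert, Finset.mem_singleton, not_or,
    List.mem_toFinset] at hc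
  obtain ⟨⟨hcS, hcx, hcy, hcp, hcq, hcc'⟩, hcwf⟩ := hc
  -- e-side walk from y to c
  obtain ⟨we, hweP, hweA, hweL⟩ := E23 H (S ∪ {p, q, x} ∪ wf.support.toFinset)
    (by simp only [Finset.mem_union, Finset.mem_insert, Finset.mem_singleton, not_or,
          List.mem_toFinset]
        exact ⟨⟨hyS, hyp', hyq, hyx⟩, hywf⟩)
    (by simp only [Finset.mem_union, Finset.mem_insert, Finset.mem_singleton, not_or,
          List.mem_toFinset]
        exact ⟨⟨hcS, hcp, hcq, hcx⟩, hcwf⟩)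
    (fun h => hcy h.symm)
    (by have h1 := Finset.card_union_le (S ∪ {p, q, x}) wf.support.toFinset
        have h0 := Finset.card_union_le S ({p, q, x} : Finset V)
        have h2 := card3 (a := p) (b := q) (c := x)
        omega)
  have hweL' : we.length = 2 ∨ we.length = 3 := by
    rcases hweL with h | ⟨h, _⟩
    · exact Or.inl h
    · exact Or.inr h
  have hxwe : x ∉ we.support := fun h => (hweA x h) (by simp)
  have hpwe : p ∉ we.support := fun h => (hweA p h) (by simp)
  have hqwe : q ∉ we.support := fun h => (hweA q h) (by simp)
  have hc'we : c' ∉ we.support := fun h => (hweA c' h) (by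
    simp only [Finset.mem_union, List.mem_toFinset]
    exact Or.inr (Walk.end_mem_support wf))
  have hwedisjf : ∀ z ∈ we.support, z ∉ wf.support := by
    intro z hz hzf
    exact (hweA z hz) (by simp only [Finset.mem_union, List.mem_toFinset]; exact Or.inr hzf)
  have hwecard : we.support.toFinset.card ≤ we.length + 1 := by
    have h3 := List.toFinset_card_le we.support
    have h4 : we.support.length = we.length + 1 := we.length_support
    omega
  have hAe : ∀ z ∈ we.support, z ∉ S := fun z hz hzS => (hweA z hz) (by simp [hzS])
  have hAf : ∀ z ∈ wf.support, z ∉ S := fun z hz hzS => (hwfA z hz) (by simp [hzS])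
  rcases Nat.lt_or_ge (L - we.length - wf.length) 2 with hr | hr
  · -- leftover case : e = f = 3 and L = 7
    have he3 : we.length = 3 := by omega
    have hf3 : wf.length = 3 := by omega
    have hL7 : L = 7 := by omega
    have hSsmall : S.card + 12 ≤ 5*k := by omega
    have hcne : ∀ z, G.Adj y z → G.Adj c z → z ∈ S ∪ {p, q, x} ∪ wf.support.toFinset := by
      rcases hweL with h | ⟨_, h⟩
      · omega
      · exact h
    obtain ⟨c5, hpc5, hqc5, hc5T, hc5adj⟩ := H.span y c (S ∪ {p, q, x} ∪ wf.support.toFinset)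
      (S ∪ {p, q} ∪ wf.support.toFinset ∪ we.support.toFinset)
      (by have h1 := Finset.card_union_le (S ∪ {p, q, x}) wf.support.toFinset
          have h0 := Finset.card_union_le S ({p, q, x} : Finset V)
          have h2 := card3 (a := p) (b := q) (c := x)
          omega)
      (by have h1 := Finset.card_union_le (S ∪ {p, q} ∪ wf.support.toFinset) we.support.toFinset
          have h0 := Finset.card_union_le (S ∪ {p, q}) wf.support.toFinset
          have h00 := Finset.card_union_le S ({p, q} : Finset V)
          have h2 := card2 (a := p) (b := q)
          omega)
      hcne
    simp only [Finset.mem_union, Finset.mem_insert, Finset.mem_singleton, not_or,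
      List.mem_toFinset] at hc5T
    obtain ⟨⟨⟨hc5S, hc5p, hc5q⟩, hc5wf⟩, hc5we⟩ := hc5T
    have hc5x : c5 ≠ x := fun h => hc5wf (h ▸ Walk.start_mem_support wf)
    have hc5y : c5 ≠ y := fun h => hc5we (h ▸ Walk.start_mem_support we)
    have hc5c : c5 ≠ c := fun h => hc5we (h ▸ Walk.end_mem_support we)
    have hc5c' : c5 ≠ c' := fun h => hc5wf (h ▸ Walk.end_mem_support wf)
    rcases hc5adj with hyc5 | hcc5
    · -- y - c5 - [CC 3] - c' - [wf.reverse] - x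
      obtain ⟨wm, hwmP, hwmL, hwmA⟩ := exactCC H 3 (by norm_num) c5 c'
        (S ∪ {y} ∪ (wf.support.toFinset.erase c'))
        hpc5 hqc5 hpc' hqc' hc5c'
        (by simp only [Finset.mem_union, Finset.mem_insert, Finset.mem_singleton,
              Finset.mem_erase, List.mem_toFinset, not_or]
            exact ⟨⟨hc5S, hc5y⟩, fun h => hc5wf h.2⟩)
        (by simp only [Finset.mem_union, Finset.mem_insert, Finset.mem_singleton,
              Finset.mem_erase, List.mem_toFinset, not_or]
            exact ⟨⟨hc'S, hc'y⟩, fun h => (h.1 rfl).elim⟩)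
        (by simp only [Finset.mem_union, Finset.mem_insert, Finset.mem_singleton,
              Finset.mem_erase, List.mem_toFinset, not_or]
            exact ⟨⟨hpS, fun h => hyp' h.symm⟩, fun h => hpwf h.2⟩)
        (by simp only [Finset.mem_union, Finset.mem_insert, Finset.mem_singleton,
              Finset.mem_erase, List.mem_toFinset, not_or]
            exact ⟨⟨hqS, fun h => hyq h.symm⟩, fun h => hqwf h.2⟩)
        (Or.inr (by
          constructor
          · omega
          · have h1 := Finset.card_union_le (S ∪ {y}) (wf.support.toFinset.erase c')
            have h0 := Finset.card_union_le S ({y} : Finset V)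
            have h2 : (wf.support.toFinset.erase c').card ≤ wf.support.toFinset.card :=
              Finset.card_erase_le
            simp only [Finset.card_singleton] at h0
            omega))
      have hwmAwf : ∀ z ∈ wm.support, z ∈ wf.reverse.support → z = c' := by
        intro z hz hz'
        rw [Walk.support_reverse, List.mem_reverse] at hz'
        by_contra hne
        exact (hwmA z hz) (by
          simp only [Finset.mem_union, Finset.mem_erase, List.mem_toFinset]
          exact Or.inr ⟨hne, hz'⟩)
      obtain ⟨hP1, hL1, hA1⟩ := joinAvoid hwmP hwfP.reverse hwmAwf
        (fun z hz hzS => (hwmA z hz) (by simp [hzS])) (revAvoid hAf)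
      set wtail := wm.append wf.reverse with hwt
      have hywt : y ∉ wtail.support := by
        intro hy0
        rcases (Walk.mem_support_append_iff _ _).mp hy0 with h | h
        · exact (hwmA y h) (by simp)
        · rw [Walk.support_reverse, List.mem_reverse] at h
          exact hywf h
      refine ⟨Walk.cons hyc5 wtail, hP1.cons hywt, ?_, ?_⟩
      · simp only [Walk.length_cons]
        rw [hL1, Walk.length_reverse, hwmL, hf3]
        omega
      · intro z hz
        rw [Walk.support_cons] at hz
        rcases List.mem_cons.mp hz with rfl | hz'
        · exact hyS
        · exact hA1 z hz'
    · -- y - [we] - c - c5 - ... - x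
      obtain ⟨wf2, hwf2P, hwf2A, hwf2L⟩ := E23 H (S ∪ {p, q, y} ∪ we.support.toFinset)
        (by simp only [Finset.mem_union, Finset.mem_insert, Finset.mem_singleton, not_or,
              List.mem_toFinset]
            exact ⟨⟨hxS, hxp, hxq, fun h => hyx h.symm⟩, hxwe⟩)
        (by simp only [Finset.mem_union, Finset.mem_insert, Finset.mem_singleton, not_or,
              List.mem_toFinset]
            exact ⟨⟨hc5S, hc5p, hc5q, hc5y⟩, hc5we⟩)
        (fun h => hc5x h.symm)
        (by have h1 := Finset.card_union_le (S ∪ {p, q, y}) we.support.toFinset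
            have h0 := Finset.card_union_le S ({p, q, y} : Finset V)
            have h2 := card3 (a := p) (b := q) (c := y)
            omega)
      have hwf2L' : wf2.length = 2 ∨ wf2.length = 3 := by
        rcases hwf2L with h | ⟨h, _⟩
        · exact Or.inl h
        · exact Or.inr h
      have hwf2we : ∀ z ∈ wf2.support, z ∉ we.support := by
        intro z hz hz'
        exact (hwf2A z hz) (by
          simp only [Finset.mem_union, List.mem_toFinset]; exact Or.inr hz')
      have hAf2 : ∀ z ∈ wf2.support, z ∉ S := fun z hz hzS => (hwf2A z hz) (by simp [hzS])
      rcases hwf2L' with hf2 | hf2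
      · -- f₂ = 2 : y - [we:3] - c - [CC 2] - c5 - [wf2.reverse:2] - x
        obtain ⟨wm, hwmP, hwmL, hwmA⟩ := exactCC H 2 (by norm_num) c c5
          (S ∪ (we.support.toFinset.erase c) ∪ (wf2.support.toFinset.erase c5))
          hpc hqc hpc5 hqc5 hcc5.ne
          (by simp only [Finset.mem_union, Finset.mem_erase, List.mem_toFinset, not_or]
              refine ⟨⟨hcS, fun h => (h.1 rfl).elim⟩, fun h => ?_⟩
              exact hwf2we c h.2 (Walk.end_mem_support we))
          (by simp only [Finset.mem_union, Finset.mem_erase, List.mem_toFinset, not_or]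
              exact ⟨⟨hc5S, fun h => hc5we h.2⟩, fun h => (h.1 rfl).elim⟩)
          (by simp only [Finset.mem_union, Finset.mem_erase, List.mem_toFinset, not_or]
              refine ⟨⟨hpS, fun h => hpwe h.2⟩, fun h => ?_⟩
              exact (hwf2A p h.2) (by simp))
          (by simp only [Finset.mem_union, Finset.mem_erase, List.mem_toFinset, not_or]
              refine ⟨⟨hqS, fun h => hqwe h.2⟩, fun h => ?_⟩
              exact (hwf2A q h.2) (by simp))
          (Or.inr (by
            constructor
            · omega
            · have h1 := Finset.card_union_le (S ∪ (we.support.toFinset.erase c))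
                (wf2.support.toFinset.erase c5)
              have h0 := Finset.card_union_le S (we.support.toFinset.erase c)
              have h2 : (we.support.toFinset.erase c).card = we.support.toFinset.card - 1 :=
                Finset.card_erase_of_mem (by simp [List.mem_toFinset])
              have h3 : (wf2.support.toFinset.erase c5).card = wf2.support.toFinset.card - 1 :=
                Finset.card_erase_of_mem (by simp [List.mem_toFinset])
              have h8 : 1 ≤ we.support.toFinset.card := Finset.card_pos.mpr
                ⟨c, by simp [List.mem_toFinset]⟩
              have h9 : 1 ≤ wf2.support.toFinset.card := Finset.card_pos.mpr
                ⟨c5, by simp [List.mem_toFinset]⟩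
              have h4 := List.toFinset_card_le we.support
              have h5 := List.toFinset_card_le wf2.support
              have h6 : we.support.length = we.length + 1 := we.length_support
              have h7 : wf2.support.length = wf2.length + 1 := wf2.length_support
              omega))
        -- assemble
        have hj1 : ∀ z ∈ wm.support, z ∈ wf2.reverse.support → z = c5 := by
          intro z hz hz'
          rw [Walk.support_reverse, List.mem_reverse] at hz'
          by_contra hne
          exact (hwmA z hz) (by
            simp only [Finset.mem_union, Finset.mem_erase, List.mem_toFinset]
            exact Or.inr ⟨hne, hz'⟩)
        obtain ⟨hP1, hL1, hA1⟩ := joinAvoid hwmP hwf2P.reverse hj1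
          (fun z hz hzS => (hwmA z hz) (by simp [hzS])) (revAvoid hAf2)
        have hj2 : ∀ z ∈ we.support, z ∈ (wm.append wf2.reverse).support → z = c := by
          intro z hz hz'
          rcases (Walk.mem_support_append_iff _ _).mp hz' with h | h
          · by_contra hne
            exact (hwmA z h) (by
              simp only [Finset.mem_union, Finset.mem_erase, List.mem_toFinset]
              exact Or.inl (Or.inr ⟨hne, hz⟩))
          · rw [Walk.support_reverse, List.mem_reverse] at h
            exact absurd hz (by intro h0; exact hwf2we z h h0)
        obtain ⟨hP2, hL2, hA2⟩ := joinAvoid hweP hP1 hj2 hAe hA1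
        refine ⟨we.append (wm.append wf2.reverse), hP2, ?_, hA2⟩
        rw [hL2, hL1, Walk.length_reverse, hwmL, he3, hf2]
        omega
      · -- f₂ = 3 : y - [we:3] - c - c5 - [wf2.reverse:3] - x
        have hcwf2 : c ∉ wf2.support := fun h => hwf2we c h (Walk.end_mem_support we)
        have hcwf2r : c ∉ wf2.reverse.support := by
          rw [Walk.support_reverse, List.mem_reverse]; exact hcwf2
        have hinnerP : (Walk.cons hcc5 wf2.reverse).IsPath := hwf2P.reverse.cons hcwf2r
        have hj2 : ∀ z ∈ we.support, z ∈ (Walk.cons hcc5 wf2.reverse).support → z = c := by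
          intro z hz hz'
          rw [Walk.support_cons] at hz'
          rcases List.mem_cons.mp hz' with rfl | hz''
          · rfl
          · rw [Walk.support_reverse, List.mem_reverse] at hz''
            exact absurd hz (fun h0 => hwf2we z hz'' h0)
        have hAinner : ∀ z ∈ (Walk.cons hcc5 wf2.reverse).support, z ∉ S := by
          intro z hz
          rw [Walk.support_cons] at hz
          rcases List.mem_cons.mp hz with rfl | hz'
          · exact hcS
          · rw [Walk.support_reverse, List.mem_reverse] at hz'
            exact hAf2 z hz'
        obtain ⟨hP2, hL2, hA2⟩ := joinAvoid hweP hinnerP hj2 hAe hAinner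
        refine ⟨we.append (Walk.cons hcc5 wf2.reverse), hP2, ?_, hA2⟩
        rw [hL2]
        simp only [Walk.length_cons, Walk.length_reverse]
        omega
  · -- main case : 2 ≤ r, use exactCC in the middle
    obtain ⟨wm, hwmP, hwmL, hwmA⟩ := exactCC H (L - we.length - wf.length) (by omega) c c'
      (S ∪ (wf.support.toFinset.erase c') ∪ (we.support.toFinset.erase c))
      hpc hqc hpc' hqc' hcc'
      (by simp only [Finset.mem_union, Finset.mem_erase, List.mem_toFinset, not_or]
          exact ⟨⟨hcS, fun h => hcwf h.2⟩, fun h => (h.1 rfl).elim⟩)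
      (by simp only [Finset.mem_union, Finset.mem_erase, List.mem_toFinset, not_or]
          exact ⟨⟨hc'S, fun h => (h.1 rfl).elim⟩, fun h => hc'we h.2⟩)
      (by simp only [Finset.mem_union, Finset.mem_erase, List.mem_toFinset, not_or]
          exact ⟨⟨hpS, fun h => hpwf h.2⟩, fun h => hpwe h.2⟩)
      (by simp only [Finset.mem_union, Finset.mem_erase, List.mem_toFinset, not_or]
          exact ⟨⟨hqS, fun h => hqwf h.2⟩, fun h => hqwe h.2⟩)
      (by
        have h1 := Finset.card_union_le (S ∪ (wf.support.toFinset.erase c'))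
          (we.support.toFinset.erase c)
        have h0 := Finset.card_union_le S (wf.support.toFinset.erase c')
        have h2 : (wf.support.toFinset.erase c').card = wf.support.toFinset.card - 1 :=
          Finset.card_erase_of_mem (by simp [List.mem_toFinset])
        have h3 : (we.support.toFinset.erase c).card = we.support.toFinset.card - 1 :=
          Finset.card_erase_of_mem (by simp [List.mem_toFinset])
        have h8 : 1 ≤ we.support.toFinset.card := Finset.card_pos.mpr
          ⟨c, by simp [List.mem_toFinset]⟩
        have h9 : 1 ≤ wf.support.toFinset.card := Finset.card_pos.mpr
          ⟨c', by simp [List.mem_toFinset]⟩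
        omega)
    have hj1 : ∀ z ∈ wm.support, z ∈ wf.reverse.support → z = c' := by
      intro z hz hz'
      rw [Walk.support_reverse, List.mem_reverse] at hz'
      by_contra hne
      exact (hwmA z hz) (by
        simp only [Finset.mem_union, Finset.mem_erase, List.mem_toFinset]
        exact Or.inl (Or.inr ⟨hne, hz'⟩))
    obtain ⟨hP1, hL1, hA1⟩ := joinAvoid hwmP hwfP.reverse hj1
      (fun z hz hzS => (hwmA z hz) (by simp [hzS])) (revAvoid hAf)
    have hj2 : ∀ z ∈ we.support, z ∈ (wm.append wf.reverse).support → z = c := by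
      intro z hz hz'
      rcases (Walk.mem_support_append_iff _ _).mp hz' with h | h
      · by_contra hne
        exact (hwmA z h) (by
          simp only [Finset.mem_union, Finset.mem_erase, List.mem_toFinset]
          exact Or.inr ⟨hne, hz⟩)
      · rw [Walk.support_reverse, List.mem_reverse] at h
        exact absurd h (hwedisjf z hz)
    obtain ⟨hP2, hL2, hA2⟩ := joinAvoid hweP hP1 hj2 hAe hA1
    refine ⟨we.append (wm.append wf.reverse), hP2, ?_, hA2⟩
    rw [hL2, hL1, Walk.length_reverse, hwmL]
    omega

/-- Assemble a `2k+1`-cycle from two edges sharing the vertex `s` and an exact path. -/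
theorem sharedCore (hk : 4 ≤ k) {s x y : V} (hxs : G.Adj x s) (hsy : G.Adj s y)
    (hxy : x ≠ y) (P : G.Walk y x) (hP : P.IsPath) (hlen : P.length = 2*k - 1)
    (hsP : s ∉ P.support) :
    ∃ w : G.Walk x x, w.IsCycle ∧ w.length = 2*k+1 ∧ s(x,s) ∈ w.edges ∧ s(s,y) ∈ w.edges := by
  have hinner : (Walk.cons hsy P).IsPath := hP.cons hsP
  have hedge : s(x, s) ∉ (Walk.cons hsy P).edges := by
    rw [Walk.edges_cons]
    intro hmem
    rcases List.mem_cons.mp hmem with heq | hmem'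
    · rw [Sym2.eq_iff] at heq
      rcases heq with ⟨h1, h2⟩ | ⟨h1, h2⟩
      · exact hxs.ne h1
      · exact hxy h1
    · exact hsP (Walk.snd_mem_support_of_mem_edges P hmem')
  refine ⟨Walk.cons hxs (Walk.cons hsy P), ?_, ?_, ?_, ?_⟩
  · exact (Walk.cons_isCycle_iff _ hxs).mpr ⟨hinner, hedge⟩
  · simp only [Walk.length_cons]
    omega
  · rw [Walk.edges_cons]
    exact List.mem_cons_self
  · rw [Walk.edges_cons, Walk.edges_cons]
    exact List.mem_cons.mpr (Or.inr (List.mem_cons_self))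

/-- The shared-vertex case where the shared vertex is the `A`-endpoint of both edges. -/
theorem sharedGG (H : Hyp G k p q) {s x y : V} (hxs : G.Adj x s) (hsy : G.Adj s y)
    (hxy : x ≠ y) (hxp : x ≠ p) (hxq : x ≠ q) (hyp' : y ≠ p) (hyq : y ≠ q)
    (hsp : s ≠ p) (hsq : s ≠ q) :
    ∃ w : G.Walk x x, w.IsCycle ∧ w.length = 2*k+1 ∧ s(x,s) ∈ w.edges ∧ s(s,y) ∈ w.edges := by
  classical
  have hk := H.hk
  obtain ⟨P, hP, hlen, hA⟩ := exactGG H (2*k - 1) (by omega) y x ({s} : Finset V)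
    (fun h => hxy h.symm) hyp' hyq hxp hxq
    (by simpa using hsy.ne') (by simpa using hxs.ne)
    (by simpa using Ne.symm hsp) (by simpa using Ne.symm hsq)
    (by simp only [Finset.card_singleton]; omega)
  exact sharedCore hk hxs hsy hxy P hP hlen (fun h => (hA s h) (by simp))

/-- The shared-vertex case where `y` is adjacent to `p`. -/
theorem sharedAG (H : Hyp G k p q) {s x y : V} (hxs : G.Adj x s) (hsy : G.Adj s y)
    (hpy : G.Adj p y)
    (hxy : x ≠ y) (hxp : x ≠ p) (hxq : x ≠ q) (hyq : y ≠ q)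
    (hsp : s ≠ p) (hsq : s ≠ q) :
    ∃ w : G.Walk x x, w.IsCycle ∧ w.length = 2*k+1 ∧ s(x,s) ∈ w.edges ∧ s(s,y) ∈ w.edges := by
  classical
  have hk := H.hk
  obtain ⟨c', hpc', hqc', hc'⟩ := H.freshC ({x, y, p, q, s} : Finset V) (by
    have h2 := card5 (a := x) (b := y) (c := p) (d := q) (e := s)
    omega)
  simp only [Finset.mem_insert, Finset.mem_singleton, not_or] at hc'
  obtain ⟨hc'x, hc'y, hc'p, hc'q, hc's⟩ := hc'
  obtain ⟨wf, hwfP, hwfA, hwfL⟩ := E23 H ({p, q, y, s} : Finset V)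
    (by simp only [Finset.mem_insert, Finset.mem_singleton, not_or]
        exact ⟨hxp, hxq, hxy, hxs.ne⟩)
    (by simp only [Finset.mem_insert, Finset.mem_singleton, not_or]
        exact ⟨hc'p, hc'q, hc'y, hc's⟩)
    (fun h => hc'x h.symm)
    (by have h2 := card4 (a := p) (b := q) (c := y) (d := s)
        omega)
  have hwfL' : wf.length = 2 ∨ wf.length = 3 := by
    rcases hwfL with h | ⟨h, _⟩
    · exact Or.inl h
    · exact Or.inr h
  have hywf : y ∉ wf.support := fun h => (hwfA y h) (by simp)
  have hpwf : p ∉ wf.support := fun h => (hwfA p h) (by simp)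
  have hqwf : q ∉ wf.support := fun h => (hwfA q h) (by simp)
  have hswf : s ∉ wf.support := fun h => (hwfA s h) (by simp)
  obtain ⟨wac, hacP, hacL, hacA⟩ := exactAC H (2*k - 1 - wf.length) (by omega) y c'
    ({s} ∪ wf.support.toFinset.erase c')
    hpy hpc' hqc' (fun h => hc'y h.symm) hyq
    (by simp only [Finset.mem_union, Finset.mem_singleton, Finset.mem_erase,
          List.mem_toFinset, not_or]
        exact ⟨hsy.ne', fun h => hywf h.2⟩)
    (by simp only [Finset.mem_union, Finset.mem_singleton, Finset.mem_erase,
          List.mem_toFinset, not_or]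
        exact ⟨hc's, fun h => (h.1 rfl).elim⟩)
    (by simp only [Finset.mem_union, Finset.mem_singleton, Finset.mem_erase,
          List.mem_toFinset, not_or]
        exact ⟨Ne.symm hsp, fun h => hpwf h.2⟩)
    (by simp only [Finset.mem_union, Finset.mem_singleton, Finset.mem_erase,
          List.mem_toFinset, not_or]
        exact ⟨Ne.symm hsq, fun h => hqwf h.2⟩)
    (Or.inl (by
      have h1 := Finset.card_union_le ({s} : Finset V) (wf.support.toFinset.erase c')
      have h2 : (wf.support.toFinset.erase c').card = wf.support.toFinset.card - 1 :=
        Finset.card_erase_of_mem (by simp [List.mem_toFinset])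
      have h3 := List.toFinset_card_le wf.support
      have h4 : wf.support.length = wf.length + 1 := wf.length_support
      simp only [Finset.card_singleton] at h1
      omega))
  have hj : ∀ z ∈ wac.support, z ∈ wf.reverse.support → z = c' := by
    intro z hz hz'
    rw [Walk.support_reverse, List.mem_reverse] at hz'
    by_contra hne
    exact (hacA z hz) (by
      simp only [Finset.mem_union, Finset.mem_erase, List.mem_toFinset]
      exact Or.inr ⟨hne, hz'⟩)
  have hsac : ∀ z ∈ wac.support, z ≠ s := by
    intro z hz h
    exact (hacA z hz) (by simp [h])
  have hP : (wac.append wf.reverse).IsPath := myJoin hacP hwfP.reverse hj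
  have hlen : (wac.append wf.reverse).length = 2*k - 1 := by
    rw [Walk.length_append, Walk.length_reverse, hacL]
    omega
  have hsP : s ∉ (wac.append wf.reverse).support := by
    intro h
    rcases (Walk.mem_support_append_iff _ _).mp h with h' | h'
    · exact hsac s h' rfl
    · rw [Walk.support_reverse, List.mem_reverse] at h'
      exact hswf h'
  exact sharedCore hk hxs hsy hxy _ hP hlen hsP

/-- The main (vertex-disjoint) case. -/
theorem asmMain (H : Hyp G k p q) {a₁ b₁ a₂ b₂ : V}
    (he₁ : G.Adj a₁ b₁) (he₂ : G.Adj a₂ b₂) (hpa₁ : G.Adj p a₁) (hpa₂ : G.Adj p a₂)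
    (haa : a₁ ≠ a₂) (hab : a₁ ≠ b₂) (hba : b₁ ≠ a₂) (hbb : b₁ ≠ b₂)
    (ha₁q : a₁ ≠ q) (hb₁p : b₁ ≠ p) (hb₁q : b₁ ≠ q)
    (ha₂q : a₂ ≠ q) (hb₂p : b₂ ≠ p) (hb₂q : b₂ ≠ q) :
    ∃ w : G.Walk a₁ a₁, w.IsCycle ∧ w.length = 2*k+1 ∧
      s(a₁,b₁) ∈ w.edges ∧ s(a₂,b₂) ∈ w.edges := by
  classical
  have hk := H.hk
  -- middle path between b₁ and b₂
  obtain ⟨wM, hMP, hMA, hML⟩ := E23 H ({p, q, a₁, a₂} : Finset V)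
    (by simp only [Finset.mem_insert, Finset.mem_singleton, not_or]
        exact ⟨hb₁p, hb₁q, he₁.ne', hba⟩)
    (by simp only [Finset.mem_insert, Finset.mem_singleton, not_or]
        exact ⟨hb₂p, hb₂q, fun h => hab h.symm, he₂.ne'⟩)
    hbb
    (by have h2 := card4 (a := p) (b := q) (c := a₁) (d := a₂); omega)
  have hML' : wM.length = 2 ∨ wM.length = 3 := by
    rcases hML with h | ⟨h, _⟩
    · exact Or.inl h
    · exact Or.inr h
  have hpM : p ∉ wM.support := fun h => (hMA p h) (by simp)
  have hqM : q ∉ wM.support := fun h => (hMA q h) (by simp)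
  have ha₁M : a₁ ∉ wM.support := fun h => (hMA a₁ h) (by simp)
  have ha₂M : a₂ ∉ wM.support := fun h => (hMA a₂ h) (by simp)
  -- a-side path from a₂ to p of exact complementary length
  obtain ⟨wQ, hQP, hQL, hQA⟩ := exactAP H (2*k - 2 - wM.length) (by omega) a₂
    ({a₁} ∪ wM.support.toFinset)
    hpa₂.ne' ha₂q
    (by simp only [Finset.mem_union, Finset.mem_singleton, List.mem_toFinset, not_or]
        exact ⟨Ne.symm haa, ha₂M⟩)
    (by simp only [Finset.mem_union, Finset.mem_singleton, List.mem_toFinset, not_or]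
        exact ⟨hpa₁.ne, hpM⟩)
    (by simp only [Finset.mem_union, Finset.mem_singleton, List.mem_toFinset, not_or]
        exact ⟨fun h => ha₁q h.symm, hqM⟩)
    (by have h1 := Finset.card_union_le ({a₁} : Finset V) wM.support.toFinset
        have h3 := List.toFinset_card_le wM.support
        have h4 : wM.support.length = wM.length + 1 := wM.length_support
        simp only [Finset.card_singleton] at h1
        omega)
  have ha₁Q : a₁ ∉ wQ.support := fun h => (hQA a₁ h) (by simp)
  have hb₁Q : b₁ ∉ wQ.support := fun h => (hQA b₁ h) (by
    simp only [Finset.mem_union, Finset.mem_singleton, List.mem_toFinset]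
    exact Or.inr (Walk.start_mem_support wM))
  have hb₂Q : b₂ ∉ wQ.support := fun h => (hQA b₂ h) (by
    simp only [Finset.mem_union, Finset.mem_singleton, List.mem_toFinset]
    exact Or.inr (Walk.end_mem_support wM))
  have hMQ : ∀ z ∈ wQ.support, z ∉ wM.support := by
    intro z hz hz'
    exact (hQA z hz) (by
      simp only [Finset.mem_union, Finset.mem_singleton, List.mem_toFinset]
      exact Or.inr hz')
  -- Q := wQ followed by the edge p - a₁
  set Qfull := wQ.append (Walk.cons hpa₁ Walk.nil) with hQfull
  have hQfullP : Qfull.IsPath := by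
    apply myJoin hQP (by simp [Walk.isPath_def, hpa₁.ne])
    intro z hz hz'
    simp only [Walk.support_cons, Walk.support_nil, List.mem_cons,
      List.not_mem_nil, or_false] at hz'
    rcases hz' with rfl | rfl
    · rfl
    · exact absurd hz ha₁Q
  have hQfullsup : ∀ z ∈ Qfull.support, z ∈ wQ.support ∨ z = a₁ := by
    intro z hz
    rcases (Walk.mem_support_append_iff _ _).mp hz with h | h
    · exact Or.inl h
    · simp only [Walk.support_cons, Walk.support_nil, List.mem_cons,
        List.not_mem_nil, or_false] at h
      rcases h with rfl | rfl
      · exact Or.inl (Walk.end_mem_support wQ)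
      · exact Or.inr rfl
  -- inner := b₂ - a₂ followed by Qfull
  have hb₂Qfull : b₂ ∉ Qfull.support := by
    intro h
    rcases hQfullsup b₂ h with h' | h'
    · exact hb₂Q h'
    · exact hab h'.symm
  have hinnerP : (Walk.cons he₂.symm Qfull).IsPath := hQfullP.cons hb₂Qfull
  -- R := wM followed by inner
  have hjR : ∀ z ∈ wM.support, z ∈ (Walk.cons he₂.symm Qfull).support → z = b₂ := by
    intro z hz hz'
    rw [Walk.support_cons] at hz'
    rcases List.mem_cons.mp hz' with rfl | hz''
    · rfl
    · rcases hQfullsup z hz'' with h' | h'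
      · exact absurd hz (by intro h0; exact hMQ z h' h0)
      · exact absurd hz (h' ▸ ha₁M)
  have hRP : (wM.append (Walk.cons he₂.symm Qfull)).IsPath := myJoin hMP hinnerP hjR
  set R := wM.append (Walk.cons he₂.symm Qfull) with hR
  -- the head edge is not among R's edges
  have hheadedge : s(a₁, b₁) ∉ R.edges := by
    rw [hR, Walk.edges_append]
    intro hmem
    rcases List.mem_append.mp hmem with h | h
    · exact ha₁M (Walk.fst_mem_support_of_mem_edges wM h)
    · rw [Walk.edges_cons] at h
      rcases List.mem_cons.mp h with heq | h'
      · rw [Sym2.eq_iff] at heq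
        rcases heq with ⟨h1, h2⟩ | ⟨h1, h2⟩
        · exact hab h1
        · exact haa h1
      · rw [Walk.edges_append] at h'
        rcases List.mem_append.mp h' with h'' | h''
        · exact hb₁Q (Walk.snd_mem_support_of_mem_edges wQ h'')
        · simp only [Walk.edges_cons, Walk.edges_nil, List.mem_cons,
            List.not_mem_nil, or_false] at h''
          rw [Sym2.eq_iff] at h''
          rcases h'' with ⟨h1, h2⟩ | ⟨h1, h2⟩
          · exact hpa₁.ne h1.symm
          · exact hb₁p h2
  refine ⟨Walk.cons he₁ R, (Walk.cons_isCycle_iff _ he₁).mpr ⟨hRP, hheadedge⟩, ?_, ?_, ?_⟩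
  · simp only [Walk.length_cons, hR, Walk.length_append, hQfull]
    rw [hQL]
    simp only [Walk.length_cons, Walk.length_nil]
    omega
  · rw [Walk.edges_cons]
    exact List.mem_cons_self
  · rw [Walk.edges_cons, hR, Walk.edges_append, Walk.edges_cons]
    refine List.mem_cons.mpr (Or.inr ?_)
    refine List.mem_append.mpr (Or.inr ?_)
    refine List.mem_cons.mpr (Or.inl ?_)
    rw [Sym2.eq_swap]

/-- Dispatch on the sharing pattern of the two edges. -/
theorem final (H : Hyp G k p q) (a₁ b₁ a₂ b₂ : V)
    (he₁ : G.Adj a₁ b₁) (he₂ : G.Adj a₂ b₂)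
    (hne : s(a₁,b₁) ≠ s(a₂,b₂)) (hpa₁ : G.Adj p a₁) (hpa₂ : G.Adj p a₂)
    (ha₁q : a₁ ≠ q) (hb₁p : b₁ ≠ p) (hb₁q : b₁ ≠ q)
    (ha₂q : a₂ ≠ q) (hb₂p : b₂ ≠ p) (hb₂q : b₂ ≠ q) :
    ∃ (v : V) (w : G.Walk v v), w.IsCycle ∧ w.length = 2*k+1 ∧
      s(a₁,b₁) ∈ w.edges ∧ s(a₂,b₂) ∈ w.edges := by
  classical
  by_cases h1 : a₁ = a₂
  · subst h1
    have hbb : b₁ ≠ b₂ := by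
      intro h; exact hne (by rw [h])
    obtain ⟨w, hw1, hw2, hw3, hw4⟩ := sharedGG H he₁.symm he₂ hbb hb₁p hb₁q hb₂p hb₂q
      hpa₁.ne' ha₁q
    exact ⟨b₁, w, hw1, hw2, by rwa [Sym2.eq_swap] at hw3, hw4⟩
  by_cases h2 : b₁ = b₂
  · subst h2
    have haa : a₁ ≠ a₂ := h1
    obtain ⟨w, hw1, hw2, hw3, hw4⟩ := sharedAG H he₁ he₂.symm hpa₂ haa
      hpa₁.ne' ha₁q ha₂q hb₁p hb₁q
    exact ⟨a₁, w, hw1, hw2, hw3, by rwa [Sym2.eq_swap] at hw4⟩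
  by_cases h3 : a₁ = b₂
  · subst h3
    have hba : b₁ ≠ a₂ := by
      intro h; exact hne (by rw [h, Sym2.eq_swap])
    obtain ⟨w, hw1, hw2, hw3, hw4⟩ := sharedAG H he₁.symm he₂.symm hpa₂ hba hb₁p hb₁q
      ha₂q hpa₁.ne' ha₁q
    refine ⟨b₁, w, hw1, hw2, by rwa [Sym2.eq_swap] at hw3, ?_⟩
    rw [Sym2.eq_swap]; exact hw4
  by_cases h4 : b₁ = a₂
  · subst h4
    obtain ⟨w, hw1, hw2, hw3, hw4⟩ := sharedAG H he₂.symm he₁.symm hpa₁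
      (fun h => h3 h.symm) hb₂p hb₂q ha₁q hb₁p hb₁q
    exact ⟨b₂, w, hw1, hw2, by rwa [Sym2.eq_swap] at hw4, by rwa [Sym2.eq_swap] at hw3⟩
  · obtain ⟨w, hw1, hw2, hw3, hw4⟩ := asmMain H he₁ he₂ hpa₁ hpa₂ h1 h3 h4 h2
      ha₁q hb₁p hb₁q ha₂q hb₂p hb₂q
    exact ⟨a₁, w, hw1, hw2, hw3, hw4⟩

theorem buildHyp {n : ℕ} (hk : 4 ≤ k) (ε : ℝ) (hε0 : 0 < ε) (hε1 : ε < 0.01)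
    (hn : Fintype.card V = n) (hnk : 2 * (k : ℝ) * ε ^ (-13 : ℤ) ≤ (n : ℝ))
    (hδ : ∀ v : V, (n : ℝ) / 2 - ε ^ 3 * (n : ℝ) - 1 / 2 < (G.degree v : ℝ))
    (hpath : ∀ S : Finset V, S.card ≤ 5 * k → ∀ u v : V, u ∉ S → v ∉ S → u ≠ v →
      ∃ w : G.Walk u v, w.IsPath ∧ (w.length = 2 ∨ w.length = 3) ∧
        ∀ z ∈ w.support, z ∉ S)
    (hpq : G.Adj p q)
    (hcommon : (n : ℝ) / 6 < ((G.neighborSet p ∩ G.neighborSet q).ncard : ℝ)) :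
    Hyp G k p q := by
  -- numeric facts
  have hkR : (4:ℝ) ≤ (k:ℝ) := by exact_mod_cast hk
  have hz : ε ^ (-13 : ℤ) = (ε^(13:ℕ))⁻¹ := by
    rw [show ((-13 : ℤ)) = -(13 : ℕ) from rfl, zpow_neg, zpow_natCast]
  have h13 : ε^(13:ℕ) ≤ (0.01:ℝ)^(13:ℕ) := pow_le_pow_left₀ hε0.le hε1.le 13
  have hpos : (0:ℝ) < ε^(13:ℕ) := pow_pos hε0 13
  have hinv : ((0.01:ℝ)^(13:ℕ))⁻¹ ≤ (ε^(13:ℕ))⁻¹ := inv_anti₀ hpos h13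
  have hknR : 2*(k:ℝ) * (10:ℝ)^(26:ℕ) ≤ n := by
    have h0 : ((0.01:ℝ)^(13:ℕ))⁻¹ = (10:ℝ)^(26:ℕ) := by norm_num
    calc 2*(k:ℝ) * (10:ℝ)^(26:ℕ) = 2*(k:ℝ) * ((0.01:ℝ)^(13:ℕ))⁻¹ := by rw [h0]
      _ ≤ 2*(k:ℝ) * (ε^(13:ℕ))⁻¹ := by
          apply mul_le_mul_of_nonneg_left hinv
          positivity
      _ = 2*(k:ℝ) * ε ^ (-13:ℤ) := by rw [hz]
      _ ≤ n := hnk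
  have hε3 : ε^3 ≤ (0.01:ℝ)^3 := pow_le_pow_left₀ hε0.le hε1.le 3
  have hn0 : (0:ℝ) ≤ n := Nat.cast_nonneg n
  have hnum10 : (10:ℝ)*k + 2*ε^3*(n:ℝ) + 1 ≤ (n:ℝ)/6 := by
    nlinarith [mul_le_mul_of_nonneg_right hε3 hn0]
  have hn6k : (5*(k:ℝ)) < (n:ℝ)/6 := by nlinarith
  have hCbig : (n:ℝ)/6 < ((G.neighborFinset p ∩ G.neighborFinset q).card : ℝ) := by
    have hCeq : (G.neighborSet p ∩ G.neighborSet q).ncard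
        = (G.neighborFinset p ∩ G.neighborFinset q).card := by
      rw [Set.ncard_eq_toFinset_card']
      congr 1
      ext c
      simp [SimpleGraph.mem_neighborFinset]
    rwa [hCeq] at hcommon
  refine ⟨hk, hpq, ?_, ?_, hpath⟩
  · -- freshC
    intro T hT
    by_contra hcon
    push_neg at hcon
    have hsub : (G.neighborFinset p ∩ G.neighborFinset q) ⊆ T := by
      intro c hc
      rw [Finset.mem_inter, SimpleGraph.mem_neighborFinset,
        SimpleGraph.mem_neighborFinset] at hc
      exact hcon c hc.1 hc.2
    have hle := Finset.card_le_card hsub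
    have hTR : ((G.neighborFinset p ∩ G.neighborFinset q).card : ℝ) ≤ (5*k : ℕ) := by
      exact_mod_cast le_trans hle hT
    push_cast at hTR
    linarith
  · -- span
    intro u v S T hS hT hcn
    by_contra hcon
    push_neg at hcon
    set NU := G.neighborFinset u with hNU
    set NV := G.neighborFinset v with hNV
    have hsub : NU ∩ NV ⊆ S := by
      intro x hx
      rw [Finset.mem_inter, hNU, hNV, SimpleGraph.mem_neighborFinset,
        SimpleGraph.mem_neighborFinset] at hx
      exact hcn x hx.1 hx.2
    have hCsub : (G.neighborFinset p ∩ G.neighborFinset q) ⊆ T ∪ (NU ∪ NV)ᶜ := by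
      intro c hc
      rw [Finset.mem_inter, SimpleGraph.mem_neighborFinset,
        SimpleGraph.mem_neighborFinset] at hc
      rw [Finset.mem_union, Finset.mem_compl]
      by_cases hcT : c ∈ T
      · exact Or.inl hcT
      · refine Or.inr ?_
        intro hmem
        rw [Finset.mem_union, hNU, hNV, SimpleGraph.mem_neighborFinset,
          SimpleGraph.mem_neighborFinset] at hmem
        rcases hmem with h | h
        · exact (hcon c hc.1 hc.2 hcT).1 h
        · exact (hcon c hc.1 hc.2 hcT).2 h
    have h1 : (G.neighborFinset p ∩ G.neighborFinset q).card ≤ T.card + ((NU ∪ NV)ᶜ).card :=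
      le_trans (Finset.card_le_card hCsub) (Finset.card_union_le _ _)
    have h2 : ((NU ∪ NV)ᶜ).card = n - (NU ∪ NV).card := by
      rw [Finset.card_compl, hn]
    have h3 : (NU ∪ NV).card ≤ n := by
      rw [← hn]; exact Finset.card_le_univ _
    have h4 : (NU ∪ NV).card + (NU ∩ NV).card = NU.card + NV.card :=
      Finset.card_union_add_card_inter _ _
    have h5 : (NU ∩ NV).card ≤ S.card := Finset.card_le_card hsub
    have hNℕ : (G.neighborFinset p ∩ G.neighborFinset q).card + NU.card + NV.card
        ≤ T.card + n + (NU ∩ NV).card := by omega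
    have hNR : ((G.neighborFinset p ∩ G.neighborFinset q).card : ℝ)
        + (NU.card : ℝ) + (NV.card : ℝ)
        ≤ (T.card : ℝ) + (n : ℝ) + ((NU ∩ NV).card : ℝ) := by exact_mod_cast hNℕ
    have hdu : (NU.card : ℝ) = (G.degree u : ℝ) := by rw [hNU, SimpleGraph.degree]
    have hdv : (NV.card : ℝ) = (G.degree v : ℝ) := by rw [hNV, SimpleGraph.degree]
    have hTR : (T.card : ℝ) ≤ 5*(k:ℝ) := by exact_mod_cast hT
    have hSR : ((NU ∩ NV).card : ℝ) ≤ 5*(k:ℝ) := by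
      have := le_trans h5 hS
      exact_mod_cast this
    have hdub := hδ u
    have hdvb := hδ v
    rw [hdu, hdv] at hNR
    linarith

/-- Orientation-insensitive version of `final`. -/
theorem final' (H : Hyp G k p q) (x₁ y₁ x₂ y₂ : V)
    (he₁ : G.Adj x₁ y₁) (he₂ : G.Adj x₂ y₂) (hne : s(x₁,y₁) ≠ s(x₂,y₂))
    (hA1 : (G.Adj p x₁ ∧ x₁ ≠ q) ∨ (G.Adj p y₁ ∧ y₁ ≠ q))
    (hP1 : (x₁ ≠ p ∧ x₁ ≠ q) ∧ (y₁ ≠ p ∧ y₁ ≠ q))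
    (hA2 : (G.Adj p x₂ ∧ x₂ ≠ q) ∨ (G.Adj p y₂ ∧ y₂ ≠ q))
    (hP2 : (x₂ ≠ p ∧ x₂ ≠ q) ∧ (y₂ ≠ p ∧ y₂ ≠ q)) :
    ∃ (v : V) (w : G.Walk v v), w.IsCycle ∧ w.length = 2*k+1 ∧
      s(x₁,y₁) ∈ w.edges ∧ s(x₂,y₂) ∈ w.edges := by
  rcases hA1 with ⟨ha1, ha1q⟩ | ⟨ha1, ha1q⟩ <;> rcases hA2 with ⟨ha2, ha2q⟩ | ⟨ha2, ha2q⟩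
  · exact final H x₁ y₁ x₂ y₂ he₁ he₂ hne ha1 ha2 ha1q hP1.2.1 hP1.2.2 ha2q hP2.2.1 hP2.2.2
  · obtain ⟨v, w, h1, h2, h3, h4⟩ := final H x₁ y₁ y₂ x₂ he₁ he₂.symm
      (by rw [Sym2.eq_swap (a := y₂)]; exact hne)
      ha1 ha2 ha1q hP1.2.1 hP1.2.2 ha2q hP2.1.1 hP2.1.2
    exact ⟨v, w, h1, h2, h3, by rwa [Sym2.eq_swap (a := x₂)]⟩
  · obtain ⟨v, w, h1, h2, h3, h4⟩ := final H y₁ x₁ x₂ y₂ he₁.symm he₂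
      (by rw [Sym2.eq_swap (a := y₁)]; exact hne)
      ha1 ha2 ha1q hP1.1.1 hP1.1.2 ha2q hP2.2.1 hP2.2.2
    exact ⟨v, w, h1, h2, by rwa [Sym2.eq_swap (a := x₁)], h4⟩
  · obtain ⟨v, w, h1, h2, h3, h4⟩ := final H y₁ x₁ y₂ x₂ he₁.symm he₂.symm
      (by rw [Sym2.eq_swap (a := y₁), Sym2.eq_swap (a := y₂)]; exact hne)
      ha1 ha2 ha1q hP1.1.1 hP1.1.2 ha2q hP2.1.1 hP2.1.2
    exact ⟨v, w, h1, h2, by rwa [Sym2.eq_swap (a := x₁)], by rwa [Sym2.eq_swap (a := x₂)]⟩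

end Stmt13


/-- Let `k ≥ 4`, `0 < ε < 0.01`, and `n ≥ 2k ε⁻¹³`. Let `G` be a simple graph with `n` vertices
whose minimum degree `δ` satisfies `δ > n/2 - ε³ n - 1/2`, and suppose that for every vertex
set `S` with `|S| ≤ 5k` and any two vertices `u, v ∉ S` there is a path of length `2` or `3`
from `u` to `v` avoiding `S`. Let `p, q` be adjacent vertices with more than `n/6` common
neighbors and let `A := N(p) \ {q}`. Then any two distinct edges, each having an endpoint in
`A` and none of whose endpoints is `p` or `q`, lie on a common cycle of length `2k+1`. -/
theorem statement13 {V : Type} [Fintype V] (G : SimpleGraph V) [DecidableRel G.Adj]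
    (k n : ℕ) (hk : 4 ≤ k) (ε : ℝ) (hε0 : 0 < ε) (hε1 : ε < 0.01)
    (hn : Fintype.card V = n) (hnk : 2 * (k : ℝ) * ε ^ (-13 : ℤ) ≤ (n : ℝ))
    (hδ : ∀ v : V, (n : ℝ) / 2 - ε ^ 3 * (n : ℝ) - 1 / 2 < (G.degree v : ℝ))
    (hpath : ∀ S : Finset V, S.card ≤ 5 * k → ∀ u v : V, u ∉ S → v ∉ S → u ≠ v →
      ∃ p : G.Walk u v, p.IsPath ∧ (p.length = 2 ∨ p.length = 3) ∧
        ∀ z ∈ p.support, z ∉ S)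
    (p q : V) (hpq : G.Adj p q)
    (hcommon : (n : ℝ) / 6 < ((G.neighborSet p ∩ G.neighborSet q).ncard : ℝ)) :
    ∀ e₁ ∈ G.edgeSet, ∀ e₂ ∈ G.edgeSet, e₁ ≠ e₂ →
      (∃ a ∈ e₁, a ∈ G.neighborSet p \ {q}) → (∀ a ∈ e₁, a ≠ p ∧ a ≠ q) →
      (∃ a ∈ e₂, a ∈ G.neighborSet p \ {q}) → (∀ a ∈ e₂, a ≠ p ∧ a ≠ q) →
      ∃ (v : V) (w : G.Walk v v), w.IsCycle ∧ w.length = 2 * k + 1 ∧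
        e₁ ∈ w.edges ∧ e₂ ∈ w.edges := by
  classical
  have H : Stmt13.Hyp G k p q := Stmt13.buildHyp hk ε hε0 hε1 hn hnk hδ hpath hpq hcommon
  intro e₁ he₁ e₂ he₂ hne hx1 hall1 hx2 hall2
  revert he₁ hne hx1 hall1
  induction e₁ using Sym2.ind with
  | _ x₁ y₁ =>
  revert he₂ hx2 hall2
  induction e₂ using Sym2.ind with
  | _ x₂ y₂ =>
  intro he₂ hx2 hall2 he₁ hne hx1 hall1
  rw [SimpleGraph.mem_edgeSet] at he₁ he₂
  have hA1 : (G.Adj p x₁ ∧ x₁ ≠ q) ∨ (G.Adj p y₁ ∧ y₁ ≠ q) := by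
    obtain ⟨a, hamem, haA⟩ := hx1
    simp only [Set.mem_diff, SimpleGraph.mem_neighborSet, Set.mem_singleton_iff] at haA
    rw [Sym2.mem_iff] at hamem
    rcases hamem with rfl | rfl
    · exact Or.inl ⟨haA.1, haA.2⟩
    · exact Or.inr ⟨haA.1, haA.2⟩
  have hA2 : (G.Adj p x₂ ∧ x₂ ≠ q) ∨ (G.Adj p y₂ ∧ y₂ ≠ q) := by
    obtain ⟨a, hamem, haA⟩ := hx2
    simp only [Set.mem_diff, SimpleGraph.mem_neighborSet, Set.mem_singleton_iff] at haA
    rw [Sym2.mem_iff] at hamem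
    rcases hamem with rfl | rfl
    · exact Or.inl ⟨haA.1, haA.2⟩
    · exact Or.inr ⟨haA.1, haA.2⟩
  have hP1 : (x₁ ≠ p ∧ x₁ ≠ q) ∧ (y₁ ≠ p ∧ y₁ ≠ q) :=
    ⟨hall1 x₁ (Sym2.mem_mk_left _ _), hall1 y₁ (Sym2.mem_mk_right _ _)⟩
  have hP2 : (x₂ ≠ p ∧ x₂ ≠ q) ∧ (y₂ ≠ p ∧ y₂ ≠ q) :=
    ⟨hall2 x₂ (Sym2.mem_mk_left _ _), hall2 y₂ (Sym2.mem_mk_right _ _)⟩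
  exact Stmt13.final' H x₁ y₁ x₂ y₂ he₁ he₂ hne hA1 hP1 hA2 hP2
end

section
/- Let G be a simple graph on vertex set V, let x, y ∈ V, and let S ⊆ V with x, y ∉ S. Set Y := N(y) \ (S ∪ {x}) and suppose that every vertex of Y has at least |Y|/2 + 5k neighbors inside Y, where k ≥ 4. Then any two distinct edges of the induced subgraph G[Y] lie on a common cycle of length 2k+1 contained in G[Y]. -/
open SimpleGraph

namespace Statement15Aux
set_option linter.unusedSectionVars false

variable {W : Type} [Fintype W] {H : SimpleGraph W}

lemma concat_isPath {u v z : W} {p : H.Walk u v} (hp : p.IsPath)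
    (h : H.Adj v z) (hz : z ∉ p.support) : (p.concat h).IsPath := by
  rw [Walk.isPath_def, Walk.support_concat, List.nodup_append']
  refine ⟨hp.support_nodup, List.nodup_singleton z, ?_⟩
  intro a ha ha'
  simp only [List.mem_singleton] at ha'
  exact hz (ha' ▸ ha)

lemma common_neighbor {u w : W} (L : List W)
    (hcard : Fintype.card W + L.length < (H.neighborSet u).ncard + (H.neighborSet w).ncard) :
    ∃ z, H.Adj u z ∧ H.Adj w z ∧ z ∉ L := by
  classical
  have h1 := Set.ncard_inter_add_ncard_union (H.neighborSet u) (H.neighborSet w)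
    (Set.toFinite _) (Set.toFinite _)
  have h2 : (H.neighborSet u ∪ H.neighborSet w).ncard ≤ Fintype.card W := by
    have := Set.ncard_le_ncard (Set.subset_univ (H.neighborSet u ∪ H.neighborSet w))
      (Set.toFinite _)
    simpa [Set.ncard_univ, Nat.card_eq_fintype_card] using this
  have h3 : L.length < (H.neighborSet u ∩ H.neighborSet w).ncard := by omega
  by_contra hc
  push_neg at hc
  have hsub : H.neighborSet u ∩ H.neighborSet w ⊆ (↑L.toFinset : Set W) := by
    intro z hz
    simp only [Finset.coe_sort_coe, List.coe_toFinset, Set.mem_setOf_eq]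
    exact hc z hz.1 hz.2
  have h4 := Set.ncard_le_ncard hsub (Set.toFinite _)
  rw [Set.ncard_coe_finset] at h4
  have h5 := L.toFinset_card_le
  omega

lemma extend {u w : W} (p : H.Walk u w)
    (hdeg : p.support.length ≤ (H.neighborSet u).ncard) :
    ∃ z, H.Adj z u ∧ z ∉ p.support := by
  classical
  by_contra hc
  push_neg at hc
  have hsub : H.neighborSet u ⊆ (↑(p.support.toFinset.erase u) : Set W) := by
    intro z hz
    simp only [Finset.coe_erase, Set.mem_diff, List.coe_toFinset, Set.mem_setOf_eq,
      Set.mem_singleton_iff]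
    exact ⟨hc z hz.symm, fun h => H.irrefl (h ▸ hz)⟩
  have h4 := Set.ncard_le_ncard hsub (Set.toFinite _)
  rw [Set.ncard_coe_finset] at h4
  have h5 : p.support.toFinset.card ≤ p.support.length := p.support.toFinset_card_le
  have h6 : u ∈ p.support.toFinset := by simp [p.start_mem_support]
  have h7 := Finset.card_erase_of_mem h6
  have h8 : 1 ≤ p.support.toFinset.card := Finset.card_pos.mpr ⟨u, h6⟩
  omega

lemma base_shared {a b d : W} (hab : H.Adj a b) (hbd : H.Adj b d) (hne : s(a,b) ≠ s(b,d)) :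
    ∃ (u w : W) (p : H.Walk u w), p.IsPath ∧ s(a,b) ∈ p.edges ∧ s(b,d) ∈ p.edges ∧
      p.length ≤ 4 := by
  have had : a ≠ d := by rintro rfl; exact hne Sym2.eq_swap
  refine ⟨a, d, Walk.cons hab (Walk.cons hbd Walk.nil), ?_, by simp, by simp, by simp⟩
  simp [Walk.isPath_def, hab.ne, hbd.ne, had]

lemma base_case {a b c d : W} (hab : H.Adj a b) (hcd : H.Adj c d) (hne : s(a,b) ≠ s(c,d))
    (hsum : ∀ u v : W, Fintype.card W + 5 < (H.neighborSet u).ncard + (H.neighborSet v).ncard) :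
    ∃ (u w : W) (p : H.Walk u w), p.IsPath ∧ s(a,b) ∈ p.edges ∧ s(c,d) ∈ p.edges ∧
      p.length ≤ 4 := by
  by_cases hbc : b = c
  · subst hbc; exact base_shared hab hcd hne
  by_cases hac : a = c
  · subst hac
    have h := base_shared hab.symm hcd
      (by simp only [Sym2.eq_swap (a := b) (b := a)]; exact hne)
    simpa only [Sym2.eq_swap (a := b) (b := a)] using h
  by_cases hbd : b = d
  · subst hbd
    have h := base_shared hab hcd.symm
      (by simp only [Sym2.eq_swap (a := b) (b := c)]; exact hne)
    simpa only [Sym2.eq_swap (a := b) (b := c)] using h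
  by_cases had : a = d
  · subst had
    have h := base_shared hab.symm hcd.symm
      (by simp only [Sym2.eq_swap (a := b) (b := a), Sym2.eq_swap (a := a) (b := c)]; exact hne)
    simpa only [Sym2.eq_swap (a := b) (b := a), Sym2.eq_swap (a := a) (b := c)] using h
  -- disjoint case
  obtain ⟨v, hbv, hcv, hvL⟩ := common_neighbor (H := H) (u := b) (w := c) [a, b, c, d]
    (by have := hsum b c; simp only [List.length_cons, List.length_nil]; omega)
  simp only [List.mem_cons, List.not_mem_nil, or_false, not_or] at hvL
  obtain ⟨hva, hvb, hvc, hvd⟩ := hvL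
  have hav : a ≠ v := fun h => hva h.symm
  have hbv' : b ≠ v := fun h => hvb h.symm
  refine ⟨a, d, Walk.cons hab (Walk.cons hbv (Walk.cons hcv.symm (Walk.cons hcd Walk.nil))),
    ?_, by simp, by simp, by simp⟩
  simp only [Walk.isPath_def, Walk.support_cons, Walk.support_nil]
  simp [hab.ne, hcd.ne, hbc, hac, hbd, had, hav, hbv', hvc, hvd]

lemma grow {e₁ e₂ : Sym2 W} (N : ℕ)
    (hN : ∀ u w : W, ∀ p : H.Walk u w, p.length < N →
      p.support.length ≤ (H.neighborSet u).ncard) :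
    ∀ (j : ℕ), ∀ (u w : W) (p : H.Walk u w), p.IsPath → e₁ ∈ p.edges → e₂ ∈ p.edges →
      p.length + j = N →
      ∃ (u' w' : W) (q : H.Walk u' w'), q.IsPath ∧ e₁ ∈ q.edges ∧ e₂ ∈ q.edges ∧
        q.length = N := by
  intro j
  induction j with
  | zero => intro u w p hp h1 h2 hlen; exact ⟨u, w, p, hp, h1, h2, by omega⟩
  | succ j ih =>
    intro u w p hp h1 h2 hlen
    obtain ⟨z, hz, hzs⟩ := extend p (hN u w p (by omega))
    exact ih z w (Walk.cons hz p) (hp.cons hzs) (by simp [h1]) (by simp [h2])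
      (by simp [Walk.length_cons]; omega)

lemma close {k : ℕ} (hk : 4 ≤ k)
    (hsum : ∀ u v : W, Fintype.card W + 2 * k <
      (H.neighborSet u).ncard + (H.neighborSet v).ncard)
    {u w : W} (p : H.Walk u w) (hp : p.IsPath) (hlen : p.length = 2 * k - 1) :
    ∃ (v : W) (c : H.Walk v v), c.IsCycle ∧ c.length = 2 * k + 1 ∧ p.edges ⊆ c.edges := by
  have hsl : p.support.length = 2 * k := by
    rw [Walk.length_support, hlen]; omega
  have huw : u ≠ w := by
    cases p with
    | nil => simp at hlen; omega
    | cons h q =>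
      rintro rfl
      exact ((Walk.cons_isPath_iff _ _).mp hp).2 (q.end_mem_support)
  obtain ⟨z, huz, hwz, hzs⟩ := common_neighbor p.support (by rw [hsl]; exact hsum u w)
  have hq : (p.concat hwz).IsPath := concat_isPath hp hwz hzs
  refine ⟨z, Walk.cons huz.symm (p.concat hwz), ?_, ?_, ?_⟩
  · rw [Walk.cons_isCycle_iff]
    refine ⟨hq, ?_⟩
    rw [Walk.edges_concat, List.concat_eq_append, List.mem_append]
    rintro (h | h)
    · exact hzs (p.fst_mem_support_of_mem_edges h)
    · simp only [List.mem_singleton, Sym2.eq, Sym2.rel_iff', Prod.mk.injEq,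
        Prod.swap_prod_mk] at h
      rcases h with ⟨rfl, rfl⟩ | ⟨h1, h2⟩
      · exact hzs p.end_mem_support
      · exact huw h2
  · simp [Walk.length_cons, Walk.length_concat, hlen]; omega
  · intro e he
    rw [Walk.edges_cons, Walk.edges_concat]
    simp only [List.concat_eq_append, List.mem_cons, List.mem_append]
    exact Or.inr (Or.inl he)

lemma main {k : ℕ} (hk : 4 ≤ k)
    (hdeg : ∀ v : W, (Fintype.card W : ℝ) / 2 + 5 * k ≤ ((H.neighborSet v).ncard : ℝ))
    {e₁ e₂ : Sym2 W} (h₁ : e₁ ∈ H.edgeSet) (h₂ : e₂ ∈ H.edgeSet) (hne : e₁ ≠ e₂) :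
    ∃ (v : W) (c : H.Walk v v), c.IsCycle ∧ c.length = 2 * k + 1 ∧
      e₁ ∈ c.edges ∧ e₂ ∈ c.edges := by
  have hd5 : ∀ v : W, 5 * k ≤ (H.neighborSet v).ncard := by
    intro v
    have h := hdeg v
    have h0 : (0:ℝ) ≤ (Fintype.card W : ℝ) / 2 := by positivity
    have h' : (5 * k : ℝ) ≤ ((H.neighborSet v).ncard : ℝ) := by push_cast; linarith
    exact_mod_cast h'
  have hsum : ∀ u v : W, Fintype.card W + 10 * k ≤
      (H.neighborSet u).ncard + (H.neighborSet v).ncard := by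
    intro u v
    have h1 := hdeg u; have h2 := hdeg v
    have h' : ((Fintype.card W : ℝ) + 10 * k) ≤
        ((H.neighborSet u).ncard : ℝ) + ((H.neighborSet v).ncard : ℝ) := by push_cast; linarith
    exact_mod_cast h'
  have he1 : ∃ a b, e₁ = s(a, b) := Sym2.ind (f := fun e => ∃ a b, e = s(a, b))
    (fun a b => ⟨a, b, rfl⟩) e₁
  have he2 : ∃ a b, e₂ = s(a, b) := Sym2.ind (f := fun e => ∃ a b, e = s(a, b))
    (fun a b => ⟨a, b, rfl⟩) e₂
  obtain ⟨a, b, rfl⟩ := he1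
  obtain ⟨c, d, rfl⟩ := he2
  have hab : H.Adj a b := h₁
  have hcd : H.Adj c d := h₂
  obtain ⟨u, w, p, hp, hm1, hm2, hlen⟩ := base_case hab hcd hne
    (fun u v => by have := hsum u v; omega)
  obtain ⟨u', w', q, hq, hq1, hq2, hqlen⟩ := grow (2 * k - 1)
    (fun u w p hlt => by
      have := hd5 u
      rw [Walk.length_support]
      omega)
    (2 * k - 1 - p.length) u w p hp hm1 hm2 (by omega)
  obtain ⟨v, cyc, hcyc, hclen, hsub⟩ := close hk
    (fun u v => by have := hsum u v; omega) q hq hqlen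
  exact ⟨v, cyc, hcyc, hclen, hsub hq1, hsub hq2⟩

end Statement15Aux

/-- Let `G` be a simple graph, `x, y` vertices, `S` a vertex set with `x, y ∉ S`, and let
`Y := N(y) \ (S ∪ {x})`. Suppose every vertex of `Y` has at least `|Y|/2 + 5k` neighbors
inside `Y`, where `k ≥ 4`. Then any two distinct edges of the induced subgraph `G[Y]` lie on a
common cycle of length `2k+1` contained in `G[Y]`. -/
theorem statement15 {V : Type} [Fintype V] (G : SimpleGraph V) (k : ℕ) (hk : 4 ≤ k)
    (x y : V) (S : Set V) (hx : x ∉ S) (hy : y ∉ S) :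
    ∀ Y : Set V, Y = G.neighborSet y \ (S ∪ {x}) →
      (∀ z ∈ Y, (Y.ncard : ℝ) / 2 + 5 * (k : ℝ) ≤ ((G.neighborSet z ∩ Y).ncard : ℝ)) →
      ∀ e₁ ∈ (G.induce Y).edgeSet, ∀ e₂ ∈ (G.induce Y).edgeSet, e₁ ≠ e₂ →
        ∃ (v : Y) (w : (G.induce Y).Walk v v), w.IsCycle ∧ w.length = 2 * k + 1 ∧
          e₁ ∈ w.edges ∧ e₂ ∈ w.edges := by
  intro Y hY hdeg e₁ he₁ e₂ he₂ hne
  classical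
  haveI : Fintype ↑Y := Fintype.ofFinite ↑Y
  have hcard : Y.ncard = Fintype.card ↑Y := by
    rw [← Nat.card_coe_set_eq, Nat.card_eq_fintype_card]
  have hnbr : ∀ v : ↑Y, ((G.induce Y).neighborSet v).ncard = (G.neighborSet ↑v ∩ Y).ncard := by
    intro v
    rw [← Nat.card_coe_set_eq, ← Nat.card_coe_set_eq]
    exact Nat.card_congr
      ⟨fun w => ⟨↑(w : ↑Y), w.2, (w : ↑Y).2⟩,
       fun z => ⟨⟨↑z, z.2.2⟩, z.2.1⟩,
       fun w => rfl, fun z => rfl⟩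
  apply Statement15Aux.main hk ?_ he₁ he₂ hne
  intro v
  rw [hnbr v, ← hcard]
  exact hdeg ↑v v.2
end
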